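/- arXiv:2410.11775 — 3 statements merged into one kernel-verified Lean document; each statement's English description precedes it below -/
import Mathlib

section
/- Suppose σ = τ = {E}, let T = (T_n : n ∈ ℕ⁺) be a sequence of trees satisfying the Assumption on the base sequence of trees, let W_n = {T_n}, and let P_n be the unique probability distribution on W_n. Suppose p(x̄,ȳ), r(x̄,ȳ) and q(x̄) are closure types over τ and that p ∧ r ∧ q is cofinally satisfiable (i.e. for infinitely many n it is satisfied by some tuples in T_n). Then there is α ∈ [0,1] such that for all ε > 0 there is c > 0 such that for all sufficiently large n: if ā ∈ T_n^{|x̄|}, B ⊆ r(ā, T_n) and |B| ≥ g₃(n), then P_n({A ∈ W_n : if A ⊨ q(ā) then (α − ε)|B| ≤ |p(ā,A) ∩ B| ≤ (α + ε)|B|}) ≥ 1 − e^{−c·g₃(n)}, where p(ā,A) = {b̄ : A ⊨ p(ā,b̄)}. -/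
open Classical Filter
noncomputable section

namespace PaperTrees

/-! ### Trees -/

section Trees
variable {A : Type*} {B : Type*}

/-- Level `l` of an edge relation: level 0 = elements with no incoming edge (roots),
level `l+1` = children of level-`l` elements. -/
def Level (E : A → A → Prop) : ℕ → A → Prop
  | 0 => fun a => ∀ x, ¬ E x a
  | (l+1) => fun a => ∃ b, Level E l b ∧ E b a

def IsRoot (E : A → A → Prop) (a : A) : Prop := ∀ x, ¬ E x a

def IsLeaf (E : A → A → Prop) (a : A) : Prop := ∀ x, ¬ E a x

/-- A tree: `E b a` means `b` is the parent of `a`. -/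
structure IsTree (E : A → A → Prop) : Prop where
  asymm : ∀ a b, E a b → a ≠ b ∧ ¬ E b a
  root_unique : ∃! r, IsRoot E r
  parent_unique : ∀ a, ¬ IsRoot E a → ∃! b, E b a
  acyclic : ∀ a, ¬ Relation.TransGen E a a

def HeightLe (E : A → A → Prop) (h : ℕ) : Prop := ∀ l a, Level E l a → l ≤ h

def HasHeight (E : A → A → Prop) (h : ℕ) : Prop := (∃ a, Level E h a) ∧ HeightLe E h

/-- `a` is an ancestor of `b`: there is a directed path from `a` to `b`. -/
def Ancestor (E : A → A → Prop) (a b : A) : Prop := Relation.TransGen E a b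

/-- The closure of a set in a tree: the set together with the root and all
ancestors of its members. -/
def treeCl (E : A → A → Prop) (S : Set A) : Set A :=
  {a | a ∈ S ∨ IsRoot E a ∨ ∃ b ∈ S, Ancestor E a b}

def IsClosedSet (E : A → A → Prop) (S : Set A) : Prop := treeCl E S = S

def Sibling (E : A → A → Prop) (a b : A) : Prop := a ≠ b ∧ ∃ c, E c a ∧ E c b

def childSet (E : A → A → Prop) (a : A) : Set A := {x | E a x}

/-- The relation induced on a subset (induced substructure). -/
def InducedRel (E : A → A → Prop) (S : Set A) : S → S → Prop := fun x y => E x y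

/-- Isomorphism of binary relational structures. -/
def RelIso' (E : A → A → Prop) (E' : B → B → Prop) : Prop :=
  ∃ f : A ≃ B, ∀ x y, E x y ↔ E' (f x) (f y)

/-- `S` carries a subtree of `(A,E)` rooted at `a`. -/
def IsSubtreeRootedAt (E : A → A → Prop) (S : Set A) (a : A) : Prop :=
  (∃ h : a ∈ S, IsRoot (InducedRel E S) ⟨a, h⟩) ∧ IsTree (InducedRel E S)

/-- `NT E E' a`: the number of subtrees of `(A,E)` rooted at `a` and isomorphic to `(B,E')`. -/
def NT (E : A → A → Prop) (E' : B → B → Prop) (a : A) : ℕ :=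
  Set.ncard {S : Set A | IsSubtreeRootedAt E S a ∧ RelIso' (InducedRel E S) E'}

end Trees

/-! ### PLA*: syntax and semantics -/

/-- A (finite) σ-structure on domain `A`: a Bool-valued interpretation of every
relation symbol. -/
abbrev Struc (σ : Type) (ar : σ → ℕ) (A : Type) : Type := ∀ R : σ, (Fin (ar R) → A) → Bool

/-- Formulas of `PLA*(σ)` with variables in `ℕ`.  Connectives are continuous
functions `[0,1]^k → [0,1]`; aggregation functions are functions
`([0,1]^{<ω})^k → [0,1]` invariant under reordering of the entries of each
sequence; an aggregation node binds the (distinct) variables of `ys`. -/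
inductive PLA (σ : Type) (ar : σ → ℕ) : Type where
  | const : unitInterval → PLA σ ar
  | eqf : ℕ → ℕ → PLA σ ar
  | rel : (R : σ) → (Fin (ar R) → ℕ) → PLA σ ar
  | conn : (k : ℕ) → (C : (Fin k → unitInterval) → unitInterval) → Continuous C →
      (Fin k → PLA σ ar) → PLA σ ar
  | agg : (k : ℕ) → (F : (Fin k → List unitInterval) → unitInterval) →
      (∀ p q : Fin k → List unitInterval, (∀ i, List.Perm (p i) (q i)) → F p = F q) →
      (ys : List ℕ) → ys.Nodup → (Fin k → PLA σ ar) → (Fin k → PLA σ ar) → PLA σ ar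

/-- Update an assignment on the variables of the list `ys` by the tuple `b`. -/
def updMany {A : Type} (β : ℕ → A) (ys : List ℕ) (b : Fin ys.length → A) : ℕ → A :=
  fun v => if h : v ∈ ys then b ⟨ys.idxOf v, List.idxOf_lt_length_iff.mpr h⟩ else β v

/-- The value `A(φ(ā)) ∈ [0,1]` of a `PLA*`-formula in a finite structure under an
assignment. -/
def eval {σ : Type} {ar : σ → ℕ} {A : Type} [Fintype A] (S : Struc σ ar A) :
    PLA σ ar → (ℕ → A) → unitInterval
  | .const c, _ => c
  | .eqf u v, β => if β u = β v then 1 else 0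
  | .rel R t, β => if S R (fun i => β (t i)) then 1 else 0
  | .conn _ C _ f, β => C fun i => eval S (f i) β
  | .agg k F _ ys _ φs χs, β =>
      let L : List (Fin ys.length → A) := (Finset.univ : Finset (Fin ys.length → A)).toList
      let vals : Fin k → List unitInterval := fun i =>
        (L.filter fun b => decide (eval S (χs i) (updMany β ys b) = 1)).map
          fun b => eval S (φs i) (updMany β ys b)
      if ∀ i, vals i ≠ [] then F vals else 0

/-- Free variables (aggregation binds the variables of `ys`). -/
def freeVars {σ : Type} {ar : σ → ℕ} : PLA σ ar → Set ℕ
  | .const _ => ∅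
  | .eqf u v => {u, v}
  | .rel _ t => Set.range t
  | .conn _ _ _ f => ⋃ i, freeVars (f i)
  | .agg _ _ _ ys _ φs χs =>
      (((⋃ i, freeVars (φs i)) ∪ ⋃ i, freeVars (χs i)) \ {v | v ∈ ys})

/-- The relation symbols occurring in a formula. -/
def symbols {σ : Type} {ar : σ → ℕ} : PLA σ ar → Set σ
  | .const _ => ∅
  | .eqf _ _ => ∅
  | .rel R _ => {R}
  | .conn _ _ _ f => ⋃ i, symbols (f i)
  | .agg _ _ _ _ _ φs χs => (⋃ i, symbols (φs i)) ∪ ⋃ i, symbols (χs i)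

/-- No aggregation function occurs in the formula. -/
def AggFree {σ : Type} {ar : σ → ℕ} : PLA σ ar → Prop
  | .const _ => True
  | .eqf _ _ => True
  | .rel _ _ => True
  | .conn _ _ _ f => ∀ i, AggFree (f i)
  | .agg _ _ _ _ _ _ _ => False

/-- `AggOK P φ` holds iff every aggregation subformula
`F(φ₁,…,φ_k : z̄ : χ₁,…,χ_k)` of `φ` satisfies `P k F (χ₁,…,χ_k) z̄`. -/
def AggOK {σ : Type} {ar : σ → ℕ}
    (P : ∀ k : ℕ, ((Fin k → List unitInterval) → unitInterval) → (Fin k → PLA σ ar) → List ℕ → Prop) :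
    PLA σ ar → Prop
  | .const _ => True
  | .eqf _ _ => True
  | .rel _ _ => True
  | .conn _ _ _ f => ∀ i, AggOK P (f i)
  | .agg k F _ ys _ φs χs => P k F χs ys ∧ (∀ i, AggOK P (φs i)) ∧ ∀ i, AggOK P (χs i)

section Signature

variable {σ : Type} {ar : σ → ℕ}

/-- `S` interprets the symbol `e` exactly as the binary relation `E0`. -/
def IsExpansionOf (e : σ) (hE : ar e = 2) {A : Type} (E0 : A → A → Prop) (S : Struc σ ar A) : Prop :=
  ∀ t : Fin (ar e) → A, S e t = true ↔ E0 (t (Fin.cast hE.symm 0)) (t (Fin.cast hE.symm 1))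

/-- `S` expands some tree of height at most `Δ`. -/
def ExpandsTreeLe (e : σ) (hE : ar e = 2) (Δ : ℕ) {A : Type} (S : Struc σ ar A) : Prop :=
  ∃ E0 : A → A → Prop, IsTree E0 ∧ HeightLe E0 Δ ∧ IsExpansionOf e hE E0 S

/-- The canonical expansion of a tree interpreting every other relation symbol as empty;
used to express satisfaction of τ-formulas in the tree itself. -/
def tauStruc [DecidableEq σ] (e : σ) (hE : ar e = 2) {A : Type} (E0 : A → A → Prop) :
    Struc σ ar A :=
  fun R t =>
    if h : R = e then
      decide (E0 (t (Fin.cast (show (2:ℕ) = ar R by rw [h, hE]) 0))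
        (t (Fin.cast (show (2:ℕ) = ar R by rw [h, hE]) 1)))
    else false

/-! ### Atomic types and closure types -/

/-- Data of a conjunction of σ-literals in `n` variables: the literals asserted
positively and those asserted negatively. -/
structure AtomicTypeData (σ : Type) (ar : σ → ℕ) (n : ℕ) : Type where
  pos : Set ((R : σ) × (Fin (ar R) → Fin n))
  neg : Set ((R : σ) × (Fin (ar R) → Fin n))

/-- Satisfaction of an atomic type (which includes the inequalities `xᵢ ≠ xⱼ`). -/
def satAtomic {n : ℕ} {A : Type} (S : Struc σ ar A) (φ : AtomicTypeData σ ar n)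
    (t : Fin n → A) : Prop :=
  (∀ l ∈ φ.pos, S l.1 (fun i => t (l.2 i)) = true) ∧
  (∀ l ∈ φ.neg, S l.1 (fun i => t (l.2 i)) = false) ∧ Function.Injective t

/-- The `E`-literal on the pair of variables `(i, j)`. -/
def pairTup (e : σ) {n : ℕ} (i j : Fin n) : Fin (ar e) → Fin n :=
  fun s => if (s : ℕ) = 0 then i else j

/-- An atomic type over σ (with respect to trees of height at most Δ): it decides all
`E`-literals, contains all inequalities (built into `satAtomic`), and is satisfiable in
some expansion of some tree of height at most `Δ`. -/
def IsAtomicType (e : σ) (hE : ar e = 2) (Δ : ℕ) {n : ℕ} (φ : AtomicTypeData σ ar n) : Prop :=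
  (∀ i j : Fin n, (⟨e, pairTup e i j⟩ ∈ φ.pos ∨ ⟨e, pairTup e i j⟩ ∈ φ.neg)) ∧
  ∃ (A : Type) (_ : Fintype A) (S : Struc σ ar A) (t : Fin n → A),
    ExpandsTreeLe e hE Δ S ∧ satAtomic S φ t

/-- A complete atomic type decides every literal. -/
def CompleteAtomic {n : ℕ} (φ : AtomicTypeData σ ar n) : Prop :=
  ∀ (R : σ) (v : Fin (ar R) → Fin n), ⟨R, v⟩ ∈ φ.pos ∨ ⟨R, v⟩ ∈ φ.neg

/-- An atomic type over τ = {E} uses only `E`-literals. -/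
def TauAtomic (e : σ) {n : ℕ} (φ : AtomicTypeData σ ar n) : Prop :=
  (∀ l ∈ φ.pos, l.1 = e) ∧ ∀ l ∈ φ.neg, l.1 = e

/-- The tuple of values of an assignment on a list of variables. -/
def xtuple {A : Type} (β : ℕ → A) (xs : List ℕ) : Fin xs.length → A := fun i => β (xs.get i)

/-- `p` (a 0/1-valued formula with free variables among `xs`) is, on all σ-structures
expanding trees of height at most `Δ`, equivalent to
`∃ w̄ (φ(x̄,w̄) ∧ "x̄w̄ is closed")` where `φ` is an atomic type implying that each `wᵢ`
lies in the closure of `x̄`. -/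
def IsClosureTypeData (e : σ) (hE : ar e = 2) (Δ : ℕ) (p : PLA σ ar) (xs : List ℕ)
    (m : ℕ) (φ : AtomicTypeData σ ar (xs.length + m)) : Prop :=
  IsAtomicType e hE Δ φ ∧
  (∀ (A : Type) (_ : Fintype A) (S : Struc σ ar A) (E0 : A → A → Prop),
     IsTree E0 → HeightLe E0 Δ → IsExpansionOf e hE E0 S →
     ∀ t : Fin (xs.length + m) → A, satAtomic S φ t →
       ∀ i : Fin m, t (Fin.natAdd xs.length i) ∈
         treeCl E0 (Set.range fun j : Fin xs.length => t (Fin.castAdd m j))) ∧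
  (∀ (A : Type) (_ : Fintype A) (S : Struc σ ar A) (E0 : A → A → Prop),
     IsTree E0 → HeightLe E0 Δ → IsExpansionOf e hE E0 S →
     ∀ β : ℕ → A,
       (eval S p β = 1 ∨ eval S p β = 0) ∧
       (eval S p β = 1 ↔ ∃ w : Fin m → A,
          satAtomic S φ (Fin.append (xtuple β xs) w) ∧
          IsClosedSet E0 (Set.range (Fin.append (xtuple β xs) w))))

/-- A closure type over σ, in the (distinct) free variables `xs`. -/
def IsClosureType (e : σ) (hE : ar e = 2) (Δ : ℕ) (p : PLA σ ar) (xs : List ℕ) : Prop :=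
  xs.Nodup ∧ freeVars p ⊆ {v | v ∈ xs} ∧
  ∃ (m : ℕ) (φ : AtomicTypeData σ ar (xs.length + m)), IsClosureTypeData e hE Δ p xs m φ

/-- A complete closure type over σ. -/
def IsCompleteClosureType (e : σ) (hE : ar e = 2) (Δ : ℕ) (p : PLA σ ar) (xs : List ℕ) : Prop :=
  xs.Nodup ∧ freeVars p ⊆ {v | v ∈ xs} ∧
  ∃ (m : ℕ) (φ : AtomicTypeData σ ar (xs.length + m)),
    IsClosureTypeData e hE Δ p xs m φ ∧ CompleteAtomic φ

/-- A closure type over τ = {E}. -/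
def IsClosureTypeTau (e : σ) (hE : ar e = 2) (Δ : ℕ) (p : PLA σ ar) (xs : List ℕ) : Prop :=
  xs.Nodup ∧ freeVars p ⊆ {v | v ∈ xs} ∧ symbols p ⊆ {e} ∧
  ∃ (m : ℕ) (φ : AtomicTypeData σ ar (xs.length + m)),
    IsClosureTypeData e hE Δ p xs m φ ∧ TauAtomic e φ

/-- Semantic implication on finite σ-structures expanding trees of height at most `Δ`. -/
def ImpOnTrees (e : σ) (hE : ar e = 2) (Δ : ℕ) (p q : PLA σ ar) : Prop :=
  ∀ (A : Type) (_ : Fintype A) (S : Struc σ ar A), ExpandsTreeLe e hE Δ S →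
    ∀ β : ℕ → A, eval S p β = 1 → eval S q β = 1

/-- `q` is (up to equivalence) the restriction `p↾τ` of the closure type `p` to τ. -/
def IsTauRestriction (e : σ) (hE : ar e = 2) (Δ : ℕ) (p q : PLA σ ar) (xs : List ℕ) : Prop :=
  IsClosureTypeTau e hE Δ q xs ∧ ImpOnTrees e hE Δ p q ∧
  ∀ q', IsClosureTypeTau e hE Δ q' xs → ImpOnTrees e hE Δ p q' → ImpOnTrees e hE Δ q q'

/-- The ȳ-rank of the closure type `p(x̄,ȳ)` is `r`: on any realization of `p↾τ` in a tree,
`|cl(b̄) ∖ cl(ā)| = r`. -/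
def HasRank (e : σ) (hE : ar e = 2) (Δ : ℕ) (p : PLA σ ar) (xs ys : List ℕ) (r : ℕ) : Prop :=
  ∃ q, IsTauRestriction e hE Δ p q (xs ++ ys) ∧
    ∀ (A : Type) (_ : Fintype A) (S : Struc σ ar A) (E0 : A → A → Prop),
      IsTree E0 → HeightLe E0 Δ → IsExpansionOf e hE E0 S →
      ∀ β : ℕ → A, eval S q β = 1 →
        (treeCl E0 (β '' {v | v ∈ ys}) \ treeCl E0 (β '' {v | v ∈ xs})).ncard = r

/-- Self-contained closure type: it implies that its variables form a closed set. -/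
def SelfContained (e : σ) (hE : ar e = 2) (Δ : ℕ) (p : PLA σ ar) (xs : List ℕ) : Prop :=
  ∀ (A : Type) (_ : Fintype A) (S : Struc σ ar A) (E0 : A → A → Prop),
    IsTree E0 → HeightLe E0 Δ → IsExpansionOf e hE E0 S →
    ∀ β : ℕ → A, eval S p β = 1 → IsClosedSet E0 (β '' {v | v ∈ xs})

/-- `ψ` is (on expansions of trees of height at most `Δ`) a closure-basic formula
`⋀ᵢ (pᵢ(x̄) → cᵢ)` where the `pᵢ` are complete closure types, `cᵢ ∈ [0,1]`, `∧ = min` and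
`→` is the Łukasiewicz implication. -/
def IsClosureBasic (e : σ) (hE : ar e = 2) (Δ : ℕ) (ψ : PLA σ ar) (xs : List ℕ) : Prop :=
  ∃ (k : ℕ) (p : Fin (k+1) → PLA σ ar) (c : Fin (k+1) → ℝ),
    (∀ i, IsCompleteClosureType e hE Δ (p i) xs ∧ c i ∈ Set.Icc (0:ℝ) 1) ∧
    ∀ (A : Type) (_ : Fintype A) (S : Struc σ ar A), ExpandsTreeLe e hE Δ S → ∀ β : ℕ → A,
      (eval S ψ β : ℝ) =
        Finset.univ.inf' Finset.univ_nonempty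
          (fun i => min 1 (1 - (eval S (p i) β : ℝ) + c i))

end Signature

end PaperTrees
/-! ### Base sequences of trees -/

namespace PaperTrees

/-- Assumption 6.4 on the base sequence of trees. -/
structure TreeSeqAssumption (V : ℕ → Type) [∀ n, Fintype (V n)]
    (En : ∀ n, V n → V n → Prop) (Δ : ℕ) (g1 g2 g3 g4 : ℕ → ℝ) : Prop where
  delta_pos : 0 < Δ
  g1_pos : ∀ n, 0 < g1 n
  g2_pos : ∀ n, 0 < g2 n
  g3_pos : ∀ n, 0 < g3 n
  g4_pos : ∀ n, 0 < g4 n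
  g1_infty : Filter.Tendsto g1 Filter.atTop Filter.atTop
  g2_infty : Filter.Tendsto g2 Filter.atTop Filter.atTop
  g3_infty : Filter.Tendsto g3 Filter.atTop Filter.atTop
  g4_infty : Filter.Tendsto g4 Filter.atTop Filter.atTop
  g3_log : ∀ α : ℝ, Filter.Tendsto (fun n => g3 n - α * Real.log n) Filter.atTop Filter.atTop
  g1_g3 : Filter.Tendsto (fun n => g1 n - g3 n) Filter.atTop Filter.atTop
  g2_over_g1 : Filter.Tendsto (fun n => g2 n / g1 n) Filter.atTop (nhds 0)
  g4_poly : ∃ P : Polynomial ℝ, ∀ n, g4 n = P.eval (n : ℝ)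
  tree : ∀ n, IsTree (En n)
  height : ∀ n, HasHeight (En n) Δ
  leaves_level : ∀ n, ∀ a : V n, IsLeaf (En n) a → Level (En n) Δ a
  child_lb : ∀ n, ∀ a : V n, ¬ IsLeaf (En n) a → g1 n ≤ (Set.ncard (childSet (En n) a) : ℝ)
  child_ub : ∀ n, ∀ a : V n, ¬ IsLeaf (En n) a → (Set.ncard (childSet (En n) a) : ℝ) ≤ g4 n
  siblings : ∀ (B : Type) [Fintype B] (E' : B → B → Prop), IsTree E' →
      (∃ h, 1 ≤ h ∧ HasHeight E' h) →
      ∀ᶠ n in Filter.atTop, ∀ a : V n, ¬ IsRoot (En n) a → 0 < NT (En n) E' a →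
        g3 n ≤ (Set.ncard {b : V n | Sibling (En n) a b ∧
          (NT (En n) E' a : ℝ) - g2 n < (NT (En n) E' b : ℝ) ∧
          (NT (En n) E' b : ℝ) < (NT (En n) E' a : ℝ) + g2 n} : ℝ)

/-- The Light Assumption on the base sequence of trees. -/
structure TreeSeqLight (V : ℕ → Type) [∀ n, Fintype (V n)]
    (En : ∀ n, V n → V n → Prop) (Δ : ℕ) (g1 g4 : ℕ → ℝ) : Prop where
  delta_pos : 0 < Δ
  g1_pos : ∀ n, 0 < g1 n
  g4_pos : ∀ n, 0 < g4 n
  g1_infty : Filter.Tendsto g1 Filter.atTop Filter.atTop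
  g4_poly : ∃ P : Polynomial ℝ, ∀ n, g4 n = P.eval (n : ℝ)
  tree : ∀ n, IsTree (En n)
  height : ∀ n, HasHeight (En n) Δ
  leaves_level : ∀ n, ∀ a : V n, IsLeaf (En n) a → Level (En n) Δ a
  child_lb : ∀ n, ∀ a : V n, ¬ IsLeaf (En n) a → g1 n ≤ (Set.ncard (childSet (En n) a) : ℝ)
  child_ub : ∀ n, ∀ a : V n, ¬ IsLeaf (En n) a → (Set.ncard (childSet (En n) a) : ℝ) ≤ g4 n

/-! ### PLA*-networks and the induced probability distributions -/

section Net
variable {σ : Type} {ar : σ → ℕ}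

/-- A `PLA*(σ)`-network based on τ = {e}: a DAG on `σ ∖ {e}` together with a formula
`θ R ∈ PLA*(par(R) ∪ {e})` (with free variables among `x₁,…,x_{ar R}`) for every
`R ∈ σ ∖ {e}`. -/
structure PLANet (σ : Type) (ar : σ → ℕ) (e : σ) where
  prec : σ → σ → Prop
  acyclic : ∀ R, ¬ Relation.TransGen prec R R
  edges_ne : ∀ R R', prec R R' → R ≠ e ∧ R' ≠ e
  θ : σ → PLA σ ar
  symbols_ok : ∀ R, R ≠ e → symbols (θ R) ⊆ {R' | prec R' R} ∪ {e}
  fv_ok : ∀ R, R ≠ e → freeVars (θ R) ⊆ {v | v < ar R}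

/-- The assignment sending variable `i < k` to `t i`. -/
def tupAssign {A : Type} (ha : Nonempty A) {k : ℕ} (t : Fin k → A) : ℕ → A :=
  fun v => if h : v < k then t ⟨v, h⟩ else ha.some

/-- The probability which the network `N` assigns to the σ-structure `S` as an expansion of
the tree `(A, E0)`: the product, over all `R ∈ σ ∖ {e}` and all tuples `ā`, of
`S(θ_R(ā))` if `R(ā)` holds and `1 - S(θ_R(ā))` otherwise.  (Since
`θ_R ∈ PLA*(par(R) ∪ τ)`, its value in `S` coincides with its value in the reduct of `S` to
the symbols of earlier levels of the DAG, so this agrees with the level-by-level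
definition of the induced distribution.) -/
def netProb [Fintype σ] [DecidableEq σ] (e : σ) (hE : ar e = 2) (N : PLANet σ ar e)
    {A : Type} [Fintype A] [DecidableEq A] (ha : Nonempty A) (E0 : A → A → Prop)
    (S : Struc σ ar A) : ℝ :=
  if IsExpansionOf e hE E0 S then
    ∏ R : σ, if R = e then 1 else
      ∏ t : Fin (ar R) → A,
        if S R t then (eval S (N.θ R) (tupAssign ha t) : ℝ)
        else 1 - (eval S (N.θ R) (tupAssign ha t) : ℝ)
  else 0

/-- The probability of a set of σ-structures under the distribution induced by the network. -/
def netPr [Fintype σ] [DecidableEq σ] (e : σ) (hE : ar e = 2) (N : PLANet σ ar e)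
    {A : Type} [Fintype A] [DecidableEq A] (ha : Nonempty A) (E0 : A → A → Prop)
    (X : Set (Struc σ ar A)) : ℝ :=
  ∑ S : Struc σ ar A, if S ∈ X then netProb e hE N ha E0 S else 0

variable [Fintype σ] [DecidableEq σ]
variable (V : ℕ → Type) [∀ n, Fintype (V n)] [∀ n, DecidableEq (V n)]
variable (En : ∀ n, V n → V n → Prop) (hne : ∀ n, Nonempty (V n))

/-- Asymptotic equivalence of two `PLA*(σ)`-formulas with respect to the sequence of
probability distributions induced by the network on the expansions of the trees `T_n`. -/
def AsympEquiv (e : σ) (hE : ar e = 2) (N : PLANet σ ar e) (φ ψ : PLA σ ar) : Prop :=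
  ∀ ε : ℝ, 0 < ε →
    Filter.Tendsto (fun n => netPr e hE N (hne n) (En n)
        {S | IsExpansionOf e hE (En n) S ∧
          ∀ β : ℕ → V n, |(eval S φ β : ℝ) - (eval S ψ β : ℝ)| ≤ ε})
      Filter.atTop (nhds 1)

/-- `(p, ptau, q)` is `(α, ε)`-balanced in `S` (with `ys` the aggregated variables). -/
def BalancedIn {A : Type} [Fintype A] (S : Struc σ ar A) (p ptau q : PLA σ ar)
    (ys : List ℕ) (α ε : ℝ) : Prop :=
  ∀ β : ℕ → A, eval S q β = 1 →
    (α - ε) * (({b : Fin ys.length → A | eval S ptau (updMany β ys b) = 1}).ncard : ℝ) ≤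
      (({b : Fin ys.length → A | eval S p (updMany β ys b) = 1 ∧
          eval S ptau (updMany β ys b) = 1}).ncard : ℝ) ∧
    (({b : Fin ys.length → A | eval S p (updMany β ys b) = 1 ∧
        eval S ptau (updMany β ys b) = 1}).ncard : ℝ) ≤
      (α + ε) * (({b : Fin ys.length → A | eval S ptau (updMany β ys b) = 1}).ncard : ℝ)

/-- `(p, ptau, q)` is `α`-balanced with respect to the network. -/
def Balanced (e : σ) (hE : ar e = 2) (N : PLANet σ ar e) (p ptau q : PLA σ ar)
    (ys : List ℕ) (α : ℝ) : Prop :=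
  ∀ ε : ℝ, 0 < ε →
    Filter.Tendsto (fun n => netPr e hE N (hne n) (En n)
        {S | IsExpansionOf e hE (En n) S ∧ BalancedIn S p ptau q ys α ε})
      Filter.atTop (nhds 1)

/-- `p ∧ q` is cofinally satisfiable: for infinitely many `n` some expansion of `T_n`
satisfies both. -/
def CofinallySat2 (e : σ) (hE : ar e = 2) (p q : PLA σ ar) : Prop :=
  ∃ᶠ n in Filter.atTop, ∃ S : Struc σ ar (V n), IsExpansionOf e hE (En n) S ∧
    ∃ β : ℕ → V n, eval S p β = 1 ∧ eval S q β = 1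

/-- The closure type `p(x̄,ȳ)` (with `x̄ = xs`, `ȳ = ys`) is ȳ-positive with respect
to the network: for every complete closure type `q(x̄)` such that `p ∧ q` is cofinally
satisfiable, the triple `(p, p↾τ, q)` is `α`-balanced for some `α > 0`. -/
def PosType (e : σ) (hE : ar e = 2) (N : PLANet σ ar e) (Δ : ℕ)
    (p : PLA σ ar) (xs ys : List ℕ) : Prop :=
  ∀ q : PLA σ ar, IsCompleteClosureType e hE Δ q xs → CofinallySat2 V En e hE p q →
    ∃ ptau, IsTauRestriction e hE Δ p ptau (xs ++ ys) ∧
      ∃ α : ℝ, 0 < α ∧ Balanced V En hne e hE N p ptau q ys α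

end Net

/-! ### Convergence testing, continuous and admissible aggregation functions -/

/-- `p` is a convergence testing sequence for parameters `c j` and `al j` (`j < k`):
lengths strictly increase, entries are nonempty sequences, and for every family of
pairwise disjoint intervals `Iv j ⊆ [0,1]`, open in the induced topology on `[0,1]`,
with `c j ∈ Iv j`, eventually all entries lie in `⋃ j, Iv j` and the proportion of
entries in `Iv j` tends to `al j`. -/
def CTFor (p : ℕ → List unitInterval) {k : ℕ} (c : Fin k → ℝ) (al : Fin k → ℝ) : Prop :=
  (∀ n, p n ≠ []) ∧ (∀ n, (p n).length < (p (n+1)).length) ∧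
  ∀ Iv : Fin k → Set ℝ,
    (∀ j, Iv j ⊆ Set.Icc (0:ℝ) 1) → (∀ j, (Iv j).OrdConnected) →
    (∀ j, ∃ U : Set ℝ, IsOpen U ∧ Iv j = U ∩ Set.Icc (0:ℝ) 1) →
    (Pairwise fun i j => Disjoint (Iv i) (Iv j)) →
    (∀ j, c j ∈ Iv j) →
    (∀ᶠ n in Filter.atTop, ∀ x ∈ p n, (x : ℝ) ∈ ⋃ j, Iv j) ∧
    ∀ j, Filter.Tendsto
      (fun n => (((p n).filter (fun x => decide ((x:ℝ) ∈ Iv j))).length : ℝ) / ((p n).length : ℝ))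
      Filter.atTop (nhds (al j))

/-- Convergence-testing sequences of `m`-tuples. -/
def CTForM {m : ℕ} (p : ℕ → Fin m → List unitInterval) (k : Fin m → ℕ)
    (c : ∀ i, Fin (k i) → ℝ) (al : ∀ i, Fin (k i) → ℝ) : Prop :=
  ∀ i, CTFor (fun n => p n i) (c i) (al i)

/-- `F` is ct-continuous with respect to the given parameters. -/
def CTContinuousAt {m : ℕ} (F : (Fin m → List unitInterval) → unitInterval)
    (k : Fin m → ℕ) (c : ∀ i, Fin (k i) → ℝ) (al : ∀ i, Fin (k i) → ℝ) : Prop :=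
  ∀ p q : ℕ → Fin m → List unitInterval, CTForM p k c al → CTForM q k c al →
    Filter.Tendsto (fun n => |(F (p n) : ℝ) - (F (q n) : ℝ)|) Filter.atTop (nhds 0)

/-- `F` is continuous (strongly admissible): ct-continuous for every choice of parameters. -/
def ContinuousAggM {m : ℕ} (F : (Fin m → List unitInterval) → unitInterval) : Prop :=
  ∀ (k : Fin m → ℕ) (c al : ∀ i, Fin (k i) → ℝ),
    (∀ i j, c i j ∈ Set.Icc (0:ℝ) 1) → (∀ i j, al i j ∈ Set.Icc (0:ℝ) 1) →
    CTContinuousAt F k c al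

/-- `F` is admissible: ct-continuous for every choice of parameters with all `al i j > 0`. -/
def AdmissibleAggM {m : ℕ} (F : (Fin m → List unitInterval) → unitInterval) : Prop :=
  ∀ (k : Fin m → ℕ) (c al : ∀ i, Fin (k i) → ℝ),
    (∀ i j, c i j ∈ Set.Icc (0:ℝ) 1) → (∀ i j, al i j ∈ Set.Icc (0:ℝ) 1) →
    (∀ i j, 0 < al i j) → CTContinuousAt F k c al

end PaperTrees

namespace PaperTrees

/-- With σ = τ = {E} the only expansion of `T_n` is `T_n` itself (realized as `tauStruc`),
and `P_n` is the point mass at it. -/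
def pointPr (V : ℕ → Type) [∀ n, Fintype (V n)] [∀ n, DecidableEq (V n)]
    (En : ∀ n, V n → V n → Prop) (n : ℕ)
    (X : Set (Struc Unit (fun _ => 2) (V n))) : ℝ :=
  if tauStruc () rfl (En n) ∈ X then 1 else 0

section Helpers

lemma tauStruc_expands {A : Type} (E0 : A → A → Prop) :
    IsExpansionOf (σ := Unit) (ar := fun _ => 2) () rfl E0 (tauStruc () rfl E0) := by
  intro t
  simp [tauStruc]

lemma tauStruc_eq_true_iff {A : Type} (E0 : A → A → Prop) (u : Fin 2 → A) :
    (tauStruc (σ := Unit) (ar := fun _ => 2) () rfl E0) () u = true ↔ E0 (u 0) (u 1) := by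
  simp [tauStruc]

lemma tauStruc_eq_false_iff {A : Type} (E0 : A → A → Prop) (u : Fin 2 → A) :
    (tauStruc (σ := Unit) (ar := fun _ => 2) () rfl E0) () u = false ↔ ¬ E0 (u 0) (u 1) := by
  constructor
  · intro h hE
    rw [(tauStruc_eq_true_iff E0 u).mpr hE] at h
    exact absurd h (by simp)
  · intro h
    cases hb : (tauStruc (σ := Unit) (ar := fun _ => 2) () rfl E0) () u with
    | false => rfl
    | true => exact absurd ((tauStruc_eq_true_iff E0 u).mp hb) h

lemma subset_treeCl {A : Type} (E : A → A → Prop) (S : Set A) : S ⊆ treeCl E S :=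
  fun _ ha => Or.inl ha

lemma treeCl_mono {A : Type} (E : A → A → Prop) {S T : Set A} (h : S ⊆ T) :
    treeCl E S ⊆ treeCl E T := by
  rintro a (ha | hr | ⟨b, hb, hab⟩)
  · exact Or.inl (h ha)
  · exact Or.inr (Or.inl hr)
  · exact Or.inr (Or.inr ⟨b, h hb, hab⟩)

lemma range_append_eq_cl {A : Type} (E0 : A → A → Prop) {L m : ℕ}
    (xt : Fin L → A) (w : Fin m → A)
    (hcl : ∀ i : Fin m, Fin.append xt w (Fin.natAdd L i) ∈
      treeCl E0 (Set.range fun j : Fin L => Fin.append xt w (Fin.castAdd m j)))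
    (hclosed : IsClosedSet E0 (Set.range (Fin.append xt w))) :
    Set.range (Fin.append xt w) = treeCl E0 (Set.range xt) := by
  have hx : (fun j : Fin L => Fin.append xt w (Fin.castAdd m j)) = xt :=
    funext fun j => Fin.append_left _ _ j
  apply Set.Subset.antisymm
  · rintro a ⟨u, rfl⟩
    refine Fin.addCases (motive := fun u => Fin.append xt w u ∈ treeCl E0 (Set.range xt))
      (fun j => ?_) (fun i => ?_) u
    · show Fin.append xt w (Fin.castAdd m j) ∈ treeCl E0 (Set.range xt)
      rw [Fin.append_left]; exact Or.inl ⟨j, rfl⟩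
    · show Fin.append xt w (Fin.natAdd L i) ∈ treeCl E0 (Set.range xt)
      have h := hcl i; rwa [hx] at h
  · have h1 : Set.range xt ⊆ Set.range (Fin.append xt w) := by
      rintro a ⟨j, rfl⟩; exact ⟨Fin.castAdd m j, Fin.append_left _ _ j⟩
    calc treeCl E0 (Set.range xt) ⊆ treeCl E0 (Set.range (Fin.append xt w)) :=
          treeCl_mono _ h1
      _ = Set.range (Fin.append xt w) := hclosed

end Helpers
lemma closure_type_transfer (Δ : ℕ) (p r : PLA Unit (fun _ => 2)) (zs : List ℕ)
    (hp : IsClosureTypeTau () rfl Δ p zs) (hr : IsClosureTypeTau () rfl Δ r zs)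
    (A0 : Type) [Fintype A0] (E00 : A0 → A0 → Prop) (β0 : ℕ → A0)
    (htree0 : IsTree E00) (hh0 : HeightLe E00 Δ)
    (hp0 : eval (tauStruc () rfl E00) p β0 = 1)
    (hr0 : eval (tauStruc () rfl E00) r β0 = 1)
    (A : Type) [Fintype A] (E0 : A → A → Prop) (β : ℕ → A)
    (htree : IsTree E0) (hh : HeightLe E0 Δ)
    (hpβ : eval (tauStruc () rfl E0) p β = 1) :
    eval (tauStruc () rfl E0) r β = 1 := by
  classical
  obtain ⟨-, -, -, mp, φp, ⟨hp_atomic, hp_cl, hp_sem⟩, -⟩ := hp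
  obtain ⟨-, -, -, mr, φr, ⟨hr_atomic, hr_cl, hr_sem⟩, -⟩ := hr
  -- realizations in the base structure
  obtain ⟨wp, satp0, closedp0⟩ :=
    (hp_sem A0 ‹Fintype A0› (tauStruc () rfl E00) E00 htree0 hh0 (tauStruc_expands E00) β0).2.mp hp0
  obtain ⟨wr, satr0, closedr0⟩ :=
    (hr_sem A0 ‹Fintype A0› (tauStruc () rfl E00) E00 htree0 hh0 (tauStruc_expands E00) β0).2.mp hr0
  set tp : Fin (zs.length + mp) → A0 := Fin.append (xtuple β0 zs) wp with htp
  set tr : Fin (zs.length + mr) → A0 := Fin.append (xtuple β0 zs) wr with htr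
  have injp : Function.Injective tp := satp0.2.2
  have injr : Function.Injective tr := satr0.2.2
  have hrangep : Set.range tp = treeCl E00 (Set.range (xtuple β0 zs)) :=
    range_append_eq_cl E00 _ _
      (fun i => hp_cl A0 ‹Fintype A0› (tauStruc () rfl E00) E00 htree0 hh0
        (tauStruc_expands E00) tp satp0 i) closedp0
  have hranger : Set.range tr = treeCl E00 (Set.range (xtuple β0 zs)) :=
    range_append_eq_cl E00 _ _
      (fun i => hr_cl A0 ‹Fintype A0› (tauStruc () rfl E00) E00 htree0 hh0
        (tauStruc_expands E00) tr satr0 i) closedr0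
  have hrange : Set.range tp = Set.range tr := hrangep.trans hranger.symm
  -- equal arities
  have hm : mr = mp := by
    have h1 : Nat.card (Set.range tp) = zs.length + mp := by
      rw [Nat.card_range_of_injective injp, Nat.card_eq_fintype_card, Fintype.card_fin]
    have h2 : Nat.card (Set.range tr) = zs.length + mr := by
      rw [Nat.card_range_of_injective injr, Nat.card_eq_fintype_card, Fintype.card_fin]
    rw [hrange, h2] at h1
    omega
  subst hm
  -- the permutation matching the two enumerations of the closure
  have hσex : ∀ u : Fin (zs.length + mr), ∃ v : Fin (zs.length + mr), tp v = tr u := by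
    intro u
    have : tr u ∈ Set.range tp := hrange ▸ Set.mem_range_self u
    exact this
  choose σf hσ using hσex
  have hσinj : Function.Injective σf := by
    intro u v huv
    apply injr
    rw [← hσ u, ← hσ v, huv]
  have hσsurj : Function.Surjective σf := Finite.injective_iff_surjective.mp hσinj
  have hσcast : ∀ j : Fin zs.length, σf (Fin.castAdd mr j) = Fin.castAdd mr j := by
    intro j
    apply injp
    rw [hσ]
    show tr (Fin.castAdd mr j) = tp (Fin.castAdd mr j)
    rw [htr, htp, Fin.append_left, Fin.append_left]
  -- transfer to the new structure
  obtain ⟨wp', satp', closedp'⟩ :=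
    (hp_sem A ‹Fintype A› (tauStruc () rfl E0) E0 htree hh (tauStruc_expands E0) β).2.mp hpβ
  set tp' : Fin (zs.length + mr) → A := Fin.append (xtuple β zs) wp' with htp'
  refine (hr_sem A ‹Fintype A› (tauStruc () rfl E0) E0 htree hh
    (tauStruc_expands E0) β).2.mpr ⟨fun i => tp' (σf (Fin.natAdd zs.length i)), ?_⟩
  have teq : Fin.append (xtuple β zs) (fun i => tp' (σf (Fin.natAdd zs.length i)))
      = fun u => tp' (σf u) := by
    funext u
    refine Fin.addCases (motive := fun u =>
      Fin.append (xtuple β zs) (fun i => tp' (σf (Fin.natAdd zs.length i))) u = tp' (σf u))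
      (fun j => ?_) (fun i => ?_) u
    · show Fin.append (xtuple β zs) (fun i => tp' (σf (Fin.natAdd zs.length i))) (Fin.castAdd mr j)
        = tp' (σf (Fin.castAdd mr j))
      rw [Fin.append_left, hσcast j]
      exact (Fin.append_left _ _ j).symm
    · show Fin.append (xtuple β zs) (fun i => tp' (σf (Fin.natAdd zs.length i))) (Fin.natAdd zs.length i)
        = tp' (σf (Fin.natAdd zs.length i))
      rw [Fin.append_right]
  rw [teq]
  constructor
  · refine ⟨?_, ?_, ?_⟩
    · intro l hl
      have h0 : E00 (tr (l.2 0)) (tr (l.2 1)) :=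
        (tauStruc_eq_true_iff E00 (fun i => tr (l.2 i))).mp (satr0.1 l hl)
      have hplit : Sigma.mk () (pairTup (ar := fun _ => 2) () (σf (l.2 0)) (σf (l.2 1)))
          ∈ φp.pos := by
        rcases hp_atomic.1 (σf (l.2 0)) (σf (l.2 1)) with h | h
        · exact h
        · exfalso
          have hE : E00 (tp (σf (l.2 0))) (tp (σf (l.2 1))) := by
            rw [hσ, hσ]; exact h0
          have hfalse := satp0.2.1 _ h
          exact (tauStruc_eq_false_iff E00 _).mp hfalse hE
      have htrue := satp'.1 _ hplit
      have hE' : E0 (tp' (σf (l.2 0))) (tp' (σf (l.2 1))) :=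
        (tauStruc_eq_true_iff E0 _).mp htrue
      exact (tauStruc_eq_true_iff E0 (fun i => tp' (σf (l.2 i)))).mpr hE'
    · intro l hl
      have h0 : ¬ E00 (tr (l.2 0)) (tr (l.2 1)) :=
        (tauStruc_eq_false_iff E00 (fun i => tr (l.2 i))).mp (satr0.2.1 l hl)
      have hplit : Sigma.mk () (pairTup (ar := fun _ => 2) () (σf (l.2 0)) (σf (l.2 1)))
          ∈ φp.neg := by
        rcases hp_atomic.1 (σf (l.2 0)) (σf (l.2 1)) with h | h
        · exfalso
          have htrue := satp0.1 _ h
          have hE : E00 (tp (σf (l.2 0))) (tp (σf (l.2 1))) :=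
            (tauStruc_eq_true_iff E00 _).mp htrue
          rw [hσ, hσ] at hE
          exact h0 hE
        · exact h
      have hfalse := satp'.2.1 _ hplit
      have hE' : ¬ E0 (tp' (σf (l.2 0))) (tp' (σf (l.2 1))) :=
        (tauStruc_eq_false_iff E0 _).mp hfalse
      exact (tauStruc_eq_false_iff E0 (fun i => tp' (σf (l.2 i)))).mpr hE'
    · exact Function.Injective.comp satp'.2.2 hσinj
  · have : (fun u => tp' (σf u)) = tp' ∘ σf := rfl
    rw [this, Set.range_comp, hσsurj.range_eq, Set.image_univ]
    exact closedp'
/-- Lemma 7.7 (2): with σ = τ, for closure types `p(x̄,ȳ)`, `r(x̄,ȳ)` and `q(x̄)` over τ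
such that `p ∧ r ∧ q` is cofinally satisfiable, there is `α ∈ [0,1]` such that for every
`ε > 0` there is `c > 0` such that for all sufficiently large `n`: whenever
`ā ∈ T_n^{|x̄|}`, `B ⊆ r(ā, T_n)` and `|B| ≥ g₃(n)`, the probability of the event
"if `q(ā)` holds then `(α-ε)|B| ≤ |p(ā,·) ∩ B| ≤ (α+ε)|B|`" is at least
`1 - e^{-c·g₃(n)}`. -/
theorem statement_6
    (V : ℕ → Type) [∀ n, Fintype (V n)] [∀ n, DecidableEq (V n)]
    (En : ∀ n, V n → V n → Prop)
    (Δ : ℕ) (g1 g2 g3 g4 : ℕ → ℝ)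
    (hT : TreeSeqAssumption V En Δ g1 g2 g3 g4)
    (p r q : PLA Unit (fun _ => 2)) (xs ys : List ℕ)
    (hp : IsClosureTypeTau () rfl Δ p (xs ++ ys))
    (hr : IsClosureTypeTau () rfl Δ r (xs ++ ys))
    (hq : IsClosureTypeTau () rfl Δ q xs)
    (hcs : ∃ᶠ n in Filter.atTop, ∃ β : ℕ → V n,
      eval (tauStruc () rfl (En n)) p β = 1 ∧
      eval (tauStruc () rfl (En n)) r β = 1 ∧
      eval (tauStruc () rfl (En n)) q β = 1) :
    ∃ α : ℝ, α ∈ Set.Icc (0:ℝ) 1 ∧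
      ∀ ε : ℝ, 0 < ε → ∃ c : ℝ, 0 < c ∧ ∃ n0 : ℕ, ∀ n, n0 ≤ n →
        ∀ (β : ℕ → V n) (B : Set (Fin ys.length → V n)),
          (∀ b ∈ B, eval (tauStruc () rfl (En n)) r (updMany β ys b) = 1) →
          g3 n ≤ (B.ncard : ℝ) →
          1 - Real.exp (-(c * g3 n)) ≤
            pointPr V En n {S | eval S q β = 1 →
              ((α - ε) * (B.ncard : ℝ) ≤
                  (({b | b ∈ B ∧ eval S p (updMany β ys b) = 1}).ncard : ℝ) ∧
                (({b | b ∈ B ∧ eval S p (updMany β ys b) = 1}).ncard : ℝ) ≤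
                  (α + ε) * (B.ncard : ℝ))} := by
  obtain ⟨n1, β1, hp1, hr1, hq1⟩ := hcs.exists
  refine ⟨1, ⟨zero_le_one, le_rfl⟩, fun ε hε => ⟨1, one_pos, 0, fun n _ β B hB hBcard => ?_⟩⟩
  have hPB : ∀ b ∈ B, eval (tauStruc () rfl (En n)) p (updMany β ys b) = 1 := fun b hb =>
    closure_type_transfer Δ r p (xs ++ ys) hr hp (V n1) (En n1) β1
      (hT.tree n1) ((hT.height n1).2) hr1 hp1 (V n) (En n) (updMany β ys b)
      (hT.tree n) ((hT.height n).2) (hB b hb)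
  have hset : {b | b ∈ B ∧ eval (tauStruc () rfl (En n)) p (updMany β ys b) = 1} = B :=
    Set.ext fun b => ⟨fun h => h.1, fun hb => ⟨hb, hPB b hb⟩⟩
  have hmem : tauStruc () rfl (En n) ∈ {S : Struc Unit (fun _ => 2) (V n) |
      eval S q β = 1 →
      ((1 - ε) * (B.ncard : ℝ) ≤
          (({b | b ∈ B ∧ eval S p (updMany β ys b) = 1}).ncard : ℝ) ∧
        (({b | b ∈ B ∧ eval S p (updMany β ys b) = 1}).ncard : ℝ) ≤
          (1 + ε) * (B.ncard : ℝ))} := by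
    intro _
    rw [hset]
    have hc : (0:ℝ) ≤ (B.ncard : ℝ) := Nat.cast_nonneg _
    constructor <;> nlinarith
  unfold pointPr
  rw [if_pos hmem]
  have := Real.exp_pos (-(1 * g3 n))
  linarith

end PaperTrees
end
end

section
/- Fix Δ ∈ ℕ⁺ and let τ = {E} ⊆ σ with σ finite relational; all trees considered have height at most Δ. Let p(x̄) be a closure type over σ. Then there is a self-contained closure type p*(x̄,ȳ) over σ such that for every σ-structure A that expands a tree: for all ā ∈ A^{|x̄|}, A ⊨ p(ā) if and only if there exists a unique b̄ with A ⊨ p*(ā,b̄). Consequently |p(A)| = |p*(A)|, and if x̄ = ūv̄ and ā ∈ A^{|ū|}, then |p(ā,A)| = |p*(ā,A)|, where φ(ā,A) denotes the set of tuples satisfying φ(ā,·) in A. -/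
open Classical Filter
noncomputable section

open Classical
noncomputable section
namespace PaperTrees

variable {σ : Type} {ar : σ → ℕ}

/-! ### Combinators -/

def pNOT (q : PLA σ ar) : PLA σ ar :=
  .conn 1 (fun v => unitInterval.symm (v 0))
    (unitInterval.continuous_symm.comp (continuous_apply 0)) (fun _ => q)

def pAND (a b : PLA σ ar) : PLA σ ar :=
  .conn 2 (fun v => min (v 0) (v 1))
    ((continuous_apply 0).min (continuous_apply 1))
    (fun i => if i = 0 then a else b)

def pOR (a b : PLA σ ar) : PLA σ ar :=
  .conn 2 (fun v => max (v 0) (v 1))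
    ((continuous_apply 0).max (continuous_apply 1))
    (fun i => if i = 0 then a else b)

def bigAnd : List (PLA σ ar) → PLA σ ar
  | [] => .const 1
  | q :: l => pAND q (bigAnd l)

def bigOr : List (PLA σ ar) → PLA σ ar
  | [] => .const 0
  | q :: l => pOR q (bigOr l)

def Erel (e : σ) (a b : ℕ) : PLA σ ar :=
  .rel e (fun i => if (i : ℕ) = 0 then a else b)

def existsParent (e : σ) (a u : ℕ) : PLA σ ar :=
  .agg 1 (fun v => if (1:unitInterval) ∈ v 0 then 1 else 0)
    (fun p q hpq => by simp only [(hpq 0).mem_iff])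
    [u] (List.nodup_singleton u)
    (fun _ => Erel e u a) (fun _ => .const 1)

def rootF (e : σ) (a u : ℕ) : PLA σ ar := pNOT (existsParent e a u)

/-! ### unitInterval facts -/

lemma ui_min_eq_one {x y : unitInterval} : min x y = 1 ↔ x = 1 ∧ y = 1 := by
  constructor
  · intro h
    have h1 : 1 ≤ min x y := h.ge
    rw [le_min_iff] at h1
    exact ⟨le_antisymm unitInterval.le_one' h1.1, le_antisymm unitInterval.le_one' h1.2⟩
  · rintro ⟨rfl, rfl⟩; simp

lemma ui_max_eq_one {x y : unitInterval} : max x y = 1 ↔ x = 1 ∨ y = 1 := by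
  constructor
  · intro h; rcases max_choice x y with h' | h'
    · left; rw [← h, h']
    · right; rw [← h, h']
  · rintro (rfl | rfl)
    · exact le_antisymm unitInterval.le_one' (le_max_left _ _)
    · exact le_antisymm unitInterval.le_one' (le_max_right _ _)

lemma ui_zero_ne_one : (0 : unitInterval) ≠ 1 := by
  intro h
  have := congrArg (Subtype.val) h
  norm_num at this

/-- 0/1-valued -/
def ZO (x : unitInterval) : Prop := x = 1 ∨ x = 0

lemma ZO.min {x y : unitInterval} (hx : ZO x) (hy : ZO y) : ZO (min x y) := by
  rcases min_choice x y with h | h <;> rw [h] <;> assumption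

lemma ZO.max {x y : unitInterval} (hx : ZO x) (hy : ZO y) : ZO (max x y) := by
  rcases max_choice x y with h | h <;> rw [h] <;> assumption

lemma ZO.symm {x : unitInterval} (hx : ZO x) : ZO (unitInterval.symm x) := by
  rcases hx with h | h <;> subst h <;> [right; left] <;> simp

lemma ZO.ne_one {x : unitInterval} (hx : ZO x) (h : x ≠ 1) : x = 0 := by
  rcases hx with h' | h'
  exacts [absurd h' h, h']

/-! ### eval lemmas for the combinators -/

variable {A : Type} [Fintype A] (S : Struc σ ar A)

lemma eval_pNOT (q : PLA σ ar) (β : ℕ → A) :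
    eval S (pNOT q) β = unitInterval.symm (eval S q β) := rfl

lemma eval_pAND (a b : PLA σ ar) (β : ℕ → A) :
    eval S (pAND a b) β = min (eval S a β) (eval S b β) := by
  show (fun v : Fin 2 → unitInterval => min (v 0) (v 1))
      (fun i => eval S ((fun i : Fin 2 => if i = 0 then a else b) i) β) = _
  norm_num

lemma eval_pOR (a b : PLA σ ar) (β : ℕ → A) :
    eval S (pOR a b) β = max (eval S a β) (eval S b β) := by
  show (fun v : Fin 2 → unitInterval => max (v 0) (v 1))
      (fun i => eval S ((fun i : Fin 2 => if i = 0 then a else b) i) β) = _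
  norm_num

lemma eval_pNOT_eq_one {q : PLA σ ar} {β : ℕ → A} :
    eval S (pNOT q) β = 1 ↔ eval S q β = 0 := by
  rw [eval_pNOT]; exact unitInterval.symm_eq_one

lemma eval_pAND_eq_one {a b : PLA σ ar} {β : ℕ → A} :
    eval S (pAND a b) β = 1 ↔ eval S a β = 1 ∧ eval S b β = 1 := by
  rw [eval_pAND]; exact ui_min_eq_one

lemma eval_pOR_eq_one {a b : PLA σ ar} {β : ℕ → A} :
    eval S (pOR a b) β = 1 ↔ eval S a β = 1 ∨ eval S b β = 1 := by
  rw [eval_pOR]; exact ui_max_eq_one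

lemma eval_bigAnd_eq_one {l : List (PLA σ ar)} {β : ℕ → A} :
    eval S (bigAnd l) β = 1 ↔ ∀ q ∈ l, eval S q β = 1 := by
  induction l with
  | nil => simp [bigAnd, eval]
  | cons q l ih => simp [bigAnd, eval_pAND_eq_one, ih]

lemma eval_bigOr_eq_one {l : List (PLA σ ar)} {β : ℕ → A} :
    eval S (bigOr l) β = 1 ↔ ∃ q ∈ l, eval S q β = 1 := by
  induction l with
  | nil => simp [bigOr, eval]
  | cons q l ih => simp [bigOr, eval_pOR_eq_one, ih]

lemma ZO_pNOT {q : PLA σ ar} {β : ℕ → A} (h : ZO (eval S q β)) :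
    ZO (eval S (pNOT q) β) := by rw [eval_pNOT]; exact h.symm

lemma ZO_pAND {a b : PLA σ ar} {β : ℕ → A} (ha : ZO (eval S a β)) (hb : ZO (eval S b β)) :
    ZO (eval S (pAND a b) β) := by rw [eval_pAND]; exact ha.min hb

lemma ZO_pOR {a b : PLA σ ar} {β : ℕ → A} (ha : ZO (eval S a β)) (hb : ZO (eval S b β)) :
    ZO (eval S (pOR a b) β) := by rw [eval_pOR]; exact ha.max hb

lemma ZO_bigAnd {l : List (PLA σ ar)} {β : ℕ → A} (h : ∀ q ∈ l, ZO (eval S q β)) :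
    ZO (eval S (bigAnd l) β) := by
  induction l with
  | nil => left; rfl
  | cons q l ih =>
      exact ZO_pAND S (h q (List.mem_cons_self)) (ih fun q hq => h q (List.mem_cons_of_mem _ hq))

lemma ZO_bigOr {l : List (PLA σ ar)} {β : ℕ → A} (h : ∀ q ∈ l, ZO (eval S q β)) :
    ZO (eval S (bigOr l) β) := by
  induction l with
  | nil => right; rfl
  | cons q l ih =>
      exact ZO_pOR S (h q (List.mem_cons_self)) (ih fun q hq => h q (List.mem_cons_of_mem _ hq))

lemma ZO_eqf {a b : ℕ} {β : ℕ → A} : ZO (eval S (.eqf a b) β) := by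
  show ZO (if β a = β b then 1 else 0)
  split <;> [left; right] <;> rfl

lemma ZO_rel {R : σ} {v : Fin (ar R) → ℕ} {β : ℕ → A} : ZO (eval S (.rel R v) β) := by
  show ZO (if S R _ then 1 else 0)
  split <;> [left; right] <;> rfl

end PaperTrees


open Classical
noncomputable section
namespace PaperTrees

variable {σ : Type} {ar : σ → ℕ}
variable {A : Type} [Fintype A] {S : Struc σ ar A}

section
variable {e : σ} {hE : ar e = 2} {E0 : A → A → Prop}

lemma eval_rel_eq (R : σ) (v : Fin (ar R) → ℕ) (β : ℕ → A) :
    eval S (.rel R v) β = if S R (fun i => β (v i)) = true then 1 else 0 := rfl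

lemma eval_Erel_eq_one (hexp : IsExpansionOf e hE E0 S) (a b : ℕ) (β : ℕ → A) :
    (eval S (Erel e a b) β = 1 ↔ E0 (β a) (β b)) := by
  have h := hexp (fun i => β (if (i : ℕ) = 0 then a else b))
  have h2 : (S e (fun i => β (if (i : ℕ) = 0 then a else b)) = true) ↔ E0 (β a) (β b) := by
    simpa using h
  by_cases hE0 : E0 (β a) (β b)
  · simp only [Erel, eval_rel_eq]
    rw [if_pos (h2.mpr hE0)]
    simpa using hE0
  · simp only [Erel, eval_rel_eq]
    rw [if_neg (fun hs => hE0 (h2.mp hs))]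
    simpa [ui_zero_ne_one] using hE0

end
end PaperTrees

namespace PaperTrees
variable {σ : Type} {ar : σ → ℕ}
variable {A : Type} [Fintype A] {S : Struc σ ar A}

section
variable {e : σ} {hE : ar e = 2} {E0 : A → A → Prop}

lemma eval_existsParent (hexp : IsExpansionOf e hE E0 S) (ha : Nonempty A)
    {a u : ℕ} (hu : u ≠ a) (β : ℕ → A) :
    (eval S (existsParent e a u) β = 1 ↔ ∃ c, E0 c (β a)) ∧
      ZO (eval S (existsParent e a u) β) := by
  classical
  have hβ' : ∀ b : Fin 1 → A, updMany β [u] b u = b 0 := by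
    intro b; simp [updMany]
  have hβa : ∀ b : Fin 1 → A, updMany β [u] b a = β a := by
    intro b; simp [updMany, Ne.symm hu]
  have hphi : ∀ b : Fin 1 → A,
      (eval S (Erel e u a) (updMany β [u] b) = 1 ↔ E0 (b 0) (β a)) := by
    intro b; rw [eval_Erel_eq_one hexp, hβ' b, hβa b]
  have hne : ((Finset.univ : Finset (Fin 1 → A)).toList : List (Fin 1 → A)) ≠ [] := by
    exact (@Finset.univ_nonempty (Fin 1 → A) _ ⟨fun _ => ha.some⟩).toList_ne_nil
  have hfil : ((Finset.univ : Finset (Fin 1 → A)).toList.filter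
      (fun b => decide (eval S (PLA.const 1) (updMany β [u] b) = 1))) =
      (Finset.univ : Finset (Fin 1 → A)).toList := by
    apply List.filter_eq_self.mpr
    intro b _
    exact decide_eq_true rfl
  have hdef : eval S (existsParent e a u) β =
      (if (∀ i : Fin 1,
          (fun _ : Fin 1 => (((Finset.univ : Finset (Fin 1 → A)).toList.filter
              (fun b => decide (eval S (PLA.const 1) (updMany β [u] b) = 1))).map
              (fun b => eval S (Erel e u a) (updMany β [u] b)))) i ≠ [])
        then (if (1:unitInterval) ∈ (((Finset.univ : Finset (Fin 1 → A)).toList.filter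
              (fun b => decide (eval S (PLA.const 1) (updMany β [u] b) = 1))).map
              (fun b => eval S (Erel e u a) (updMany β [u] b))) then 1 else 0)
        else 0) := rfl
  rw [hfil] at hdef
  have hc : ∀ i : Fin 1, (fun _ : Fin 1 => (((Finset.univ : Finset (Fin 1 → A)).toList).map
      (fun b => eval S (Erel e u a) (updMany β [u] b)))) i ≠ [] := by
    intro i h
    simp only [List.map_eq_nil_iff] at h
    exact hne h
  rw [if_pos hc] at hdef
  have hmem : ((1:unitInterval) ∈ ((Finset.univ : Finset (Fin 1 → A)).toList).map
      (fun b => eval S (Erel e u a) (updMany β [u] b))) ↔ ∃ c, E0 c (β a) := by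
    rw [List.mem_map]
    constructor
    · rintro ⟨b, -, hb⟩
      exact ⟨b ⟨0, Nat.zero_lt_one⟩, (hphi b).mp hb⟩
    · rintro ⟨c, hc'⟩
      exact ⟨fun _ => c, Finset.mem_toList.mpr (Finset.mem_univ _),
        (hphi (fun _ => c)).mpr hc'⟩
  constructor
  · rw [hdef]
    constructor
    · intro h
      by_contra hcon
      rw [if_neg (fun hm => hcon (hmem.mp hm))] at h
      exact ui_zero_ne_one h
    · intro h
      rw [if_pos (hmem.mpr h)]
  · rw [hdef]
    split
    · left; rfl
    · right; rfl

end
end PaperTrees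

namespace PaperTrees
variable {σ : Type} {ar : σ → ℕ}
variable {A : Type} [Fintype A] {S : Struc σ ar A}

section
variable {e : σ} {hE : ar e = 2} {E0 : A → A → Prop}

lemma eval_rootF (hexp : IsExpansionOf e hE E0 S) (ha : Nonempty A)
    {a u : ℕ} (hu : u ≠ a) (β : ℕ → A) :
    (eval S (rootF e a u) β = 1 ↔ IsRoot E0 (β a)) ∧ ZO (eval S (rootF e a u) β) := by
  obtain ⟨h1, h2⟩ := eval_existsParent (S := S) hexp ha hu β
  constructor
  · rw [rootF, eval_pNOT_eq_one]
    constructor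
    · intro h c hc
      have h3 : eval S (existsParent e a u) β = 1 := h1.mpr ⟨c, hc⟩
      rw [h] at h3
      exact ui_zero_ne_one h3
    · intro h
      apply h2.ne_one
      intro h'
      obtain ⟨c, hc⟩ := h1.mp h'
      exact h c hc
  · exact ZO_pNOT S h2

lemma eval_eqf_eq_one {a b : ℕ} {β : ℕ → A} :
    eval S (.eqf a b) β = 1 ↔ β a = β b := by
  show (if β a = β b then (1:unitInterval) else 0) = 1 ↔ _
  split
  · simpa
  · simpa [ui_zero_ne_one] using ‹¬ _›

end

/-! ### eval depends only on free variables -/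

lemma updMany_eq_of_not_mem {β : ℕ → A} {ys : List ℕ} {b : Fin ys.length → A} {v : ℕ}
    (h : v ∉ ys) : updMany β ys b v = β v := dif_neg h

lemma updMany_eq_of_mem {β : ℕ → A} {ys : List ℕ} {b : Fin ys.length → A} {v : ℕ}
    (h : v ∈ ys) : updMany β ys b v = b ⟨ys.idxOf v, List.idxOf_lt_length_iff.mpr h⟩ :=
  dif_pos h

lemma updMany_get {β : ℕ → A} {ys : List ℕ} (hnd : ys.Nodup) (b : Fin ys.length → A)
    (i : Fin ys.length) : updMany β ys b (ys.get i) = b i := by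
  rw [updMany_eq_of_mem (List.get_mem ys i)]
  congr 1
  apply Fin.ext
  show ys.idxOf ys[(i:ℕ)] = (i:ℕ)
  exact List.Nodup.idxOf_getElem hnd _ _

lemma eval_congr (S : Struc σ ar A) :
    ∀ (q : PLA σ ar) (β β' : ℕ → A), (∀ v ∈ freeVars q, β v = β' v) →
      eval S q β = eval S q β' := by
  intro q
  induction q with
  | const c => intro β β' h; rfl
  | eqf a b =>
      intro β β' h
      have ha : β a = β' a := h a (by left; rfl)
      have hb : β b = β' b := h b (by right; rfl)
      show (if β a = β b then (1:unitInterval) else 0) = (if β' a = β' b then 1 else 0)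
      rw [ha, hb]
  | rel R v =>
      intro β β' h
      have : (fun i => β (v i)) = fun i => β' (v i) :=
        funext fun i => h (v i) ⟨i, rfl⟩
      show (if S R (fun i => β (v i)) = true then (1:unitInterval) else 0) = _
      rw [this]
      rfl
  | conn k C hC f ih =>
      intro β β' h
      show C (fun i => eval S (f i) β) = C (fun i => eval S (f i) β')
      congr 1
      funext i
      exact ih i β β' fun v hv => h v (Set.mem_iUnion.mpr ⟨i, hv⟩)
  | agg k F hF ys hnd φs χs ihφ ihχ =>
      intro β β' h
      have hupd : ∀ (g : PLA σ ar) (hg : (∃ i, g = φs i) ∨ (∃ i, g = χs i)) (b : Fin ys.length → A),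
          ∀ v ∈ freeVars g, updMany β ys b v = updMany β' ys b v := by
        intro g hg b v hv
        by_cases hm : v ∈ ys
        · rw [updMany_eq_of_mem hm, updMany_eq_of_mem hm]
        · rw [updMany_eq_of_not_mem hm, updMany_eq_of_not_mem hm]
          apply h
          show v ∈ (((⋃ i, freeVars (φs i)) ∪ ⋃ i, freeVars (χs i)) \ {v | v ∈ ys})
          refine ⟨?_, hm⟩
          rcases hg with ⟨i, rfl⟩ | ⟨i, rfl⟩
          · exact Or.inl (Set.mem_iUnion.mpr ⟨i, hv⟩)
          · exact Or.inr (Set.mem_iUnion.mpr ⟨i, hv⟩)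
      have hφ : ∀ i b, eval S (φs i) (updMany β ys b) = eval S (φs i) (updMany β' ys b) :=
        fun i b => ihφ i _ _ (hupd (φs i) (Or.inl ⟨i, rfl⟩) b)
      have hχ : ∀ i b, eval S (χs i) (updMany β ys b) = eval S (χs i) (updMany β' ys b) :=
        fun i b => ihχ i _ _ (hupd (χs i) (Or.inr ⟨i, rfl⟩) b)
      have : (fun i => ((Finset.univ : Finset (Fin ys.length → A)).toList.filter
            (fun b => decide (eval S (χs i) (updMany β ys b) = 1))).map
            (fun b => eval S (φs i) (updMany β ys b)))
          = (fun i => ((Finset.univ : Finset (Fin ys.length → A)).toList.filter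
            (fun b => decide (eval S (χs i) (updMany β' ys b) = 1))).map
            (fun b => eval S (φs i) (updMany β' ys b))) := by
        funext i
        rw [List.filter_congr (fun b _ => by rw [hχ i b])]
        exact List.map_congr_left (fun b _ => hφ i b)
      show (fun vals : Fin k → List unitInterval => if (∀ i, vals i ≠ []) then F vals else 0)
            (fun i => ((Finset.univ : Finset (Fin ys.length → A)).toList.filter
            (fun b => decide (eval S (χs i) (updMany β ys b) = 1))).map
            (fun b => eval S (φs i) (updMany β ys b)))
          = (fun vals : Fin k → List unitInterval => if (∀ i, vals i ≠ []) then F vals else 0)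
            (fun i => ((Finset.univ : Finset (Fin ys.length → A)).toList.filter
            (fun b => decide (eval S (χs i) (updMany β' ys b) = 1))).map
            (fun b => eval S (φs i) (updMany β' ys b)))
      exact congrArg (fun vals : Fin k → List unitInterval => if (∀ i, vals i ≠ []) then F vals else 0) this

end PaperTrees


open Classical
noncomputable section
namespace PaperTrees

section TreeFacts
variable {A : Type} {E0 : A → A → Prop}

lemma IsTree.parent_eq (hT : IsTree E0) {a b c : A} (hac : E0 a c) (hbc : E0 b c) : a = b := by
  have hnr : ¬ IsRoot E0 c := fun hr => hr a hac
  obtain ⟨x, -, hx⟩ := hT.parent_unique c hnr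
  rw [hx a hac, hx b hbc]

lemma IsTree.root_eq (hT : IsTree E0) {r r' : A} (hr : IsRoot E0 r) (hr' : IsRoot E0 r') :
    r = r' := by
  obtain ⟨x, -, hx⟩ := hT.root_unique
  rw [hx r hr, hx r' hr']

lemma IsTree.exists_root (hT : IsTree E0) : ∃ r, IsRoot E0 r := by
  obtain ⟨r, hr, -⟩ := hT.root_unique
  exact ⟨r, hr⟩

lemma IsClosedSet.mem_of_root {s : Set A} (hs : IsClosedSet E0 s) {r : A}
    (hr : IsRoot E0 r) : r ∈ s := by
  rw [← hs]
  exact Or.inr (Or.inl hr)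

lemma IsClosedSet.mem_of_ancestor {s : Set A} (hs : IsClosedSet E0 s) {a b : A}
    (hb : b ∈ s) (hab : Ancestor E0 a b) : a ∈ s := by
  rw [← hs]
  exact Or.inr (Or.inr ⟨b, hb, hab⟩)

lemma subset_treeCl_s7 {s : Set A} : s ⊆ treeCl E0 s := fun a ha => Or.inl ha

/-- A chain of indices with the same pattern determines equal values. -/
lemma chain_determined (hT : IsTree E0) {n : ℕ} {t t' : Fin n → A} {P : Fin n → Fin n → Prop}
    (ht : ∀ i j, P i j → E0 (t i) (t j)) (ht' : ∀ i j, P i j → E0 (t' i) (t' j)) :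
    ∀ (c : List (Fin n)) (i : Fin n), List.Chain P i c →
      t (c.getLastD i) = t' (c.getLastD i) → t i = t' i := by
  intro c
  induction c with
  | nil => intro i _ h; simpa using h
  | cons j cs ih =>
      intro i hch hlast
      replace hch : P i j ∧ List.Chain P j cs := List.isChain_cons_cons.mp hch
      have hj : t j = t' j := by
        apply ih j hch.2
        rw [List.getLastD_cons] at hlast
        exact hlast
      have h1 : E0 (t i) (t j) := ht _ _ hch.1
      have h2 : E0 (t' i) (t j) := hj ▸ ht' _ _ hch.1
      exact hT.parent_eq h1 h2

/-- From an ancestor relation into a closed tuple, extract an index chain. -/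
lemma anc_chain (hT : IsTree E0) {n : ℕ} {t : Fin n → A} {P : Fin n → Fin n → Prop}
    (hpat : ∀ i j, E0 (t i) (t j) → P i j) (hcl : IsClosedSet E0 (Set.range t)) :
    ∀ {a b : A}, Relation.TransGen E0 a b → ∀ i j : Fin n, a = t i → b = t j →
      ∃ c : List (Fin n), List.Chain P i c ∧ c.getLastD i = j ∧ c ≠ [] := by
  intro a b hab
  induction hab using Relation.TransGen.head_induction_on with
  | single hxb =>
      rename_i x
      intro i j hi hj
      subst hi; subst hj
      exact ⟨[j], List.Chain.cons (hpat i j hxb) List.Chain.nil, rfl, by simp⟩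
  | head hxy hyb IH =>
      rename_i x y
      intro i j hi hj
      have hy : y ∈ Set.range t := hcl.mem_of_ancestor ⟨j, rfl⟩ (hj ▸ hyb)
      obtain ⟨i₁, hi₁⟩ := hy
      obtain ⟨c, hch, hlast, -⟩ := IH i₁ j hi₁.symm hj
      subst hi
      refine ⟨i₁ :: c, List.Chain.cons (hpat i i₁ (hi₁ ▸ hxy)) hch, ?_, by simp⟩
      rw [List.getLastD_cons]
      exact hlast

end TreeFacts
end PaperTrees

namespace PaperTrees
section TreeFacts
variable {A : Type} {E0 : A → A → Prop}

/-- Main uniqueness: two same-pattern closed tuples agreeing on the `x`-part coincide. -/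
lemma tuple_unique (hT : IsTree E0) {n nx : ℕ} {t t' : Fin n → A} {P : Fin n → Fin n → Prop}
    (ht : ∀ i j, E0 (t i) (t j) ↔ P i j) (ht' : ∀ i j, E0 (t' i) (t' j) ↔ P i j)
    (hx : ∀ i : Fin n, (i : ℕ) < nx → t i = t' i)
    (hinj : Function.Injective t) (hinj' : Function.Injective t')
    (hcl : IsClosedSet E0 (Set.range t)) (hcl' : IsClosedSet E0 (Set.range t'))
    (hmem : ∀ i : Fin n, nx ≤ (i : ℕ) → t i ∈ treeCl E0 (t '' {j : Fin n | (j : ℕ) < nx}))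
    (hmem' : ∀ i : Fin n, nx ≤ (i : ℕ) → t' i ∈ treeCl E0 (t' '' {j : Fin n | (j : ℕ) < nx})) :
    t = t' := by
  funext i
  by_cases hi : (i : ℕ) < nx
  · exact hx i hi
  push_neg at hi
  by_cases hch : ∃ (c : List (Fin n)) (j : Fin n), List.Chain P i c ∧ c.getLastD i = j ∧
      (j : ℕ) < nx ∧ c ≠ []
  · obtain ⟨c, j, hc, hlast, hjx, -⟩ := hch
    apply chain_determined hT (fun i j => (ht i j).mpr) (fun i j => (ht' i j).mpr) c i hc
    rw [hlast]
    exact hx j hjx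
  · have hroot : IsRoot E0 (t i) := by
      rcases hmem i hi with hmem0 | hmem0 | hmem0
      · obtain ⟨j, hj, hji⟩ := hmem0
        exact absurd (hinj hji.symm ▸ hj) (by simp [Fin.ext_iff] at *; omega)
      · exact hmem0
      · obtain ⟨b, ⟨j, hj, rfl⟩, hanc⟩ := hmem0
        obtain ⟨c, hc, hlast, hne⟩ :=
          anc_chain hT (fun i j h => (ht i j).mp h) hcl hanc i j rfl rfl
        exact absurd ⟨c, j, hc, hlast, hj, hne⟩ hch
    have hroot' : IsRoot E0 (t' i) := by
      rcases hmem' i hi with hmem0 | hmem0 | hmem0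
      · obtain ⟨j, hj, hji⟩ := hmem0
        exact absurd (hinj' hji.symm ▸ hj) (by simp [Fin.ext_iff] at *; omega)
      · exact hmem0
      · obtain ⟨b, ⟨j, hj, rfl⟩, hanc⟩ := hmem0
        obtain ⟨c, hc, hlast, hne⟩ :=
          anc_chain hT (fun i j h => (ht' i j).mp h) hcl' hanc i j rfl rfl
        exact absurd ⟨c, j, hc, hlast, hj, hne⟩ hch
    exact hT.root_eq hroot hroot'

end TreeFacts
end PaperTrees


open Classical
noncomputable section
namespace PaperTrees

variable {σ : Type} {ar : σ → ℕ}

/-! ### The closedness/pattern formula ψ -/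

def edgeLits (e : σ) (n : ℕ) (φ : AtomicTypeData σ ar n) (zvar : Fin n → ℕ) :
    List (PLA σ ar) :=
  (List.finRange n).flatMap fun i => (List.finRange n).map fun j =>
    if (⟨e, pairTup e i j⟩ : (R : σ) × (Fin (ar R) → Fin n)) ∈ φ.pos then
      Erel e (zvar i) (zvar j)
    else pNOT (Erel e (zvar i) (zvar j))

def ineqLits (n : ℕ) (zvar : Fin n → ℕ) : List (PLA σ ar) :=
  (List.finRange n).flatMap fun i => (List.finRange n).map fun j =>
    if i = j then .const 1 else pNOT (.eqf (zvar i) (zvar j))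

def rootClause (e : σ) (n : ℕ) (zvar : Fin n → ℕ) (u : ℕ) : PLA σ ar :=
  bigOr ((List.finRange n).map fun i => rootF e (zvar i) u)

def parentClauses (e : σ) (n : ℕ) (zvar : Fin n → ℕ) (u : ℕ) : List (PLA σ ar) :=
  (List.finRange n).map fun i =>
    pOR (rootF e (zvar i) u) (bigOr ((List.finRange n).map fun j => Erel e (zvar j) (zvar i)))

def chainFml (e : σ) {n : ℕ} (zvar : Fin n → ℕ) {N : ℕ} (f : Fin (N+2) → Fin n) : PLA σ ar :=
  bigAnd ((List.finRange (N+1)).map fun s => Erel e (zvar (f s.castSucc)) (zvar (f s.succ)))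

def chainFmlas (e : σ) (n nx : ℕ) (zvar : Fin n → ℕ) (i : Fin n) : List (PLA σ ar) :=
  (List.range (n-1)).flatMap fun N =>
    (((Finset.univ : Finset (Fin (N+2) → Fin n)).toList).filter
      (fun f => decide (f 0 = i ∧ ((f (Fin.last (N+1))) : ℕ) < nx))).map
      (fun f => chainFml e zvar f)

def clClauses (e : σ) (n nx : ℕ) (zvar : Fin n → ℕ) (u : ℕ) : List (PLA σ ar) :=
  ((List.finRange n).filter (fun i : Fin n => decide (nx ≤ (i : ℕ)))).map
    fun i => pOR (rootF e (zvar i) u) (bigOr (chainFmlas e n nx zvar i))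

def psi (e : σ) (n nx : ℕ) (φ : AtomicTypeData σ ar n) (zvar : Fin n → ℕ) (u : ℕ) :
    PLA σ ar :=
  bigAnd (edgeLits e n φ zvar ++ ineqLits n zvar ++ [rootClause e n zvar u] ++
    parentClauses e n zvar u ++ clClauses e n nx zvar u)

/-! ### semantics -/

section Sem
variable {A : Type} [Fintype A] {S : Struc σ ar A}
variable {e : σ} {hE : ar e = 2} {E0 : A → A → Prop}

lemma transChain {N : ℕ} (g : Fin (N+2) → A)
    (hg : ∀ s : Fin (N+1), E0 (g s.castSucc) (g s.succ)) :
    Relation.TransGen E0 (g 0) (g (Fin.last (N+1))) := by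
  have key : ∀ k (h : k + 1 < N + 2), Relation.TransGen E0 (g 0) (g ⟨k+1, h⟩) := by
    intro k
    induction k with
    | zero => intro h; exact Relation.TransGen.single (hg ⟨0, by omega⟩)
    | succ k ih =>
        intro h
        exact (ih (by omega)).tail (hg ⟨k+1, by omega⟩)
  exact key N (by omega)

lemma eval_chainFml_eq_one (hexp : IsExpansionOf e hE E0 S) {n : ℕ} {zvar : Fin n → ℕ}
    {N : ℕ} {f : Fin (N+2) → Fin n} {β : ℕ → A} :
    eval S (chainFml e zvar f) β = 1 ↔
      ∀ s : Fin (N+1), E0 (β (zvar (f s.castSucc))) (β (zvar (f s.succ))) := by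
  rw [chainFml, eval_bigAnd_eq_one]
  constructor
  · intro h s
    exact (eval_Erel_eq_one hexp _ _ _).mp
      (h _ (List.mem_map.mpr ⟨s, List.mem_finRange s, rfl⟩))
  · rintro h q hq
    obtain ⟨s, -, rfl⟩ := List.mem_map.mp hq
    exact (eval_Erel_eq_one hexp _ _ _).mpr (h s)

/-- From an index chain, a satisfied chain formula. -/
lemma chain_to_formula (hT : IsTree E0) (hexp : IsExpansionOf e hE E0 S)
    {n nx : ℕ} {φ : AtomicTypeData σ ar n} {zvar : Fin n → ℕ} {β : ℕ → A}
    (h1 : ∀ i j : Fin n, (⟨e, pairTup e i j⟩ : (R : σ) × (Fin (ar R) → Fin n)) ∈ φ.pos →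
      E0 (β (zvar i)) (β (zvar j)))
    {i j : Fin n} (hjx : (j : ℕ) < nx) (c : List (Fin n))
    (hch : List.Chain (fun i j => (⟨e, pairTup e i j⟩ : (R : σ) × (Fin (ar R) → Fin n)) ∈ φ.pos) i c)
    (hlast : c.getLastD i = j) (hne : c ≠ []) :
    ∃ q ∈ chainFmlas e n nx zvar i, eval S q β = 1 := by
  classical
  have hchain' : List.Chain'
      (fun i j => (⟨e, pairTup e i j⟩ : (R : σ) × (Fin (ar R) → Fin n)) ∈ φ.pos) (i :: c) := hch
  have hRl : List.Chain' (fun a b => Relation.TransGen E0 (β (zvar a)) (β (zvar b))) (i :: c) :=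
    hchain'.imp (fun a b h => Relation.TransGen.single (h1 a b h))
  haveI : IsTrans (Fin n) (fun a b => Relation.TransGen E0 (β (zvar a)) (β (zvar b))) :=
    ⟨fun a b c hab hbc => hab.trans hbc⟩
  have hpw := List.isChain_iff_pairwise.mp hRl
  have hnd : (i :: c).Nodup := hpw.imp (fun {a b} h => by
    intro hab
    subst hab
    exact absurd h (hT.acyclic _))
  have hlen : (i :: c).length ≤ n := by
    have := hnd.length_le_card
    simpa [Fintype.card_fin] using this
  have hlen2 : 2 ≤ (i :: c).length := by
    have : 0 < c.length := List.length_pos_iff.mpr hne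
    simp only [List.length_cons]
    omega
  obtain ⟨N, hNl⟩ : ∃ N, N + 2 = (i :: c).length := ⟨(i :: c).length - 2, by omega⟩
  have hf0 : (i :: c).get (Fin.cast hNl 0) = i := rfl
  have hcast : (Fin.cast hNl (Fin.last (N+1)) : Fin (i :: c).length)
      = ⟨(i :: c).length - 1, by omega⟩ := by
    apply Fin.ext
    simp only [Fin.coe_cast, Fin.val_last]
    omega
  have hflast : (i :: c).get (Fin.cast hNl (Fin.last (N+1))) = j := by
    rw [hcast, List.get_length_sub_one]
    rw [List.getLast_cons hne]
    rw [← hlast, List.getLastD_eq_getLast?, List.getLast?_eq_getLast hne]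
    rfl
  refine ⟨chainFml e zvar (fun s => (i :: c).get (Fin.cast hNl s)), ?_, ?_⟩
  · rw [chainFmlas, List.mem_flatMap]
    refine ⟨N, List.mem_range.mpr (by omega), ?_⟩
    rw [List.mem_map]
    refine ⟨_, ?_, rfl⟩
    rw [List.mem_filter]
    exact ⟨Finset.mem_toList.mpr (Finset.mem_univ _),
      decide_eq_true ⟨hf0, by show ((i :: c).get (Fin.cast hNl (Fin.last (N+1))) : ℕ) < nx; rw [hflast]; exact hjx⟩⟩
  · rw [eval_chainFml_eq_one hexp]
    intro s
    apply h1
    have hs : (s : ℕ) < (i :: c).length - 1 := by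
      have := s.2
      omega
    have := List.isChain_iff_getElem.mp hchain' (s : ℕ) (by omega)
    convert this using 3 <;> apply Fin.ext <;> simp [Fin.coe_cast]
end Sem
end PaperTrees


open Classical
noncomputable section
namespace PaperTrees

variable {σ : Type} {ar : σ → ℕ}
variable {A : Type} [Fintype A] {S : Struc σ ar A}
variable {e : σ} {hE : ar e = 2} {E0 : A → A → Prop}

section PsiSem
variable {n nx : ℕ} {φ : AtomicTypeData σ ar n} {zvar : Fin n → ℕ} {u : ℕ} {β : ℕ → A}

private abbrev PP (e : σ) (φ : AtomicTypeData σ ar n) (i j : Fin n) : Prop :=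
  (⟨e, pairTup e i j⟩ : (R : σ) × (Fin (ar R) → Fin n)) ∈ φ.pos

lemma mem_edgeLits (i j : Fin n) :
    (if PP e φ i j then Erel e (zvar i) (zvar j) else pNOT (Erel e (zvar i) (zvar j)))
      ∈ edgeLits e n φ zvar := by
  rw [edgeLits, List.mem_flatMap]
  exact ⟨i, List.mem_finRange i, List.mem_map.mpr ⟨j, List.mem_finRange j, rfl⟩⟩

lemma mem_ineqLits (i j : Fin n) :
    (if i = j then (.const 1 : PLA σ ar) else pNOT (.eqf (zvar i) (zvar j)))
      ∈ ineqLits n zvar := by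
  rw [ineqLits, List.mem_flatMap]
  exact ⟨i, List.mem_finRange i, List.mem_map.mpr ⟨j, List.mem_finRange j, rfl⟩⟩

lemma mem_psi_parts {q : PLA σ ar} :
    q ∈ (edgeLits e n φ zvar ++ ineqLits n zvar ++ [rootClause e n zvar u] ++
      parentClauses e n zvar u ++ clClauses e n nx zvar u) ↔
    q ∈ edgeLits e n φ zvar ∨ q ∈ ineqLits n zvar ∨ q = rootClause e n zvar u ∨
      q ∈ parentClauses e n zvar u ∨ q ∈ clClauses e n nx zvar u := by
  simp only [List.mem_append, List.mem_singleton]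
  tauto

/-- Soundness of ψ. -/
lemma psi_sound (hT : IsTree E0) (hexp : IsExpansionOf e hE E0 S) (ha : Nonempty A)
    (hu : ∀ i, u ≠ zvar i)
    (hψ : eval S (psi e n nx φ zvar u) β = 1) :
    (∀ i j, E0 (β (zvar i)) (β (zvar j)) ↔ PP e φ i j) ∧
    Function.Injective (fun i => β (zvar i)) ∧
    IsClosedSet E0 (Set.range (fun i => β (zvar i))) ∧
    (∀ i : Fin n, nx ≤ (i : ℕ) →
      β (zvar i) ∈ treeCl E0 ((fun i => β (zvar i)) '' {j : Fin n | (j : ℕ) < nx})) := by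
  rw [psi, eval_bigAnd_eq_one] at hψ
  have hallE : ∀ q ∈ edgeLits e n φ zvar, eval S q β = 1 :=
    fun q hq => hψ q (mem_psi_parts.mpr (Or.inl hq))
  have hallI : ∀ q ∈ ineqLits (σ := σ) (ar := ar) n zvar, eval S q β = 1 :=
    fun q hq => hψ q (mem_psi_parts.mpr (Or.inr (Or.inl hq)))
  have hallR : eval S (rootClause e n zvar u) β = 1 :=
    hψ _ (mem_psi_parts.mpr (Or.inr (Or.inr (Or.inl rfl))))
  have hallP : ∀ q ∈ parentClauses e n zvar u, eval S q β = 1 :=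
    fun q hq => hψ q (mem_psi_parts.mpr (Or.inr (Or.inr (Or.inr (Or.inl hq)))))
  have hallC : ∀ q ∈ clClauses e n nx zvar u, eval S q β = 1 :=
    fun q hq => hψ q (mem_psi_parts.mpr (Or.inr (Or.inr (Or.inr (Or.inr hq)))))
  -- pattern
  have hpat : ∀ i j, E0 (β (zvar i)) (β (zvar j)) ↔ PP e φ i j := by
    intro i j
    have hq := hallE _ (mem_edgeLits (e := e) (φ := φ) (zvar := zvar) i j)
    by_cases hP : PP e φ i j
    · rw [if_pos hP] at hq
      exact iff_of_true ((eval_Erel_eq_one hexp _ _ _).mp hq) hP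
    · rw [if_neg hP] at hq
      rw [eval_pNOT_eq_one] at hq
      refine iff_of_false (fun hE0 => ?_) hP
      have := (eval_Erel_eq_one hexp (zvar i) (zvar j) β).mpr hE0
      rw [hq] at this
      exact ui_zero_ne_one this
  -- injectivity
  have hinj : Function.Injective (fun i => β (zvar i)) := by
    intro i j hij
    by_contra hne
    have hq := hallI _ (mem_ineqLits (zvar := zvar) i j)
    rw [if_neg hne, eval_pNOT_eq_one] at hq
    have : eval S (.eqf (zvar i) (zvar j)) β = 1 := eval_eqf_eq_one.mpr hij
    rw [hq] at this
    exact ui_zero_ne_one this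
  -- root in range
  have hroot : ∃ i, IsRoot E0 (β (zvar i)) := by
    rw [rootClause, eval_bigOr_eq_one] at hallR
    obtain ⟨q, hq, hval⟩ := hallR
    obtain ⟨i, -, rfl⟩ := List.mem_map.mp hq
    exact ⟨i, ((eval_rootF hexp ha (hu i) β).1).mp hval⟩
  -- parents in range
  have hpar : ∀ (i : Fin n) (x : A), E0 x (β (zvar i)) →
      x ∈ Set.range (fun i => β (zvar i)) := by
    intro i x hx
    have hq := hallP _ (List.mem_map.mpr ⟨i, List.mem_finRange i, rfl⟩)
    rw [eval_pOR_eq_one] at hq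
    rcases hq with hq | hq
    · exact absurd hx (((eval_rootF hexp ha (hu i) β).1).mp hq x)
    · rw [eval_bigOr_eq_one] at hq
      obtain ⟨q, hq', hval⟩ := hq
      obtain ⟨j, -, rfl⟩ := List.mem_map.mp hq'
      have hji : E0 (β (zvar j)) (β (zvar i)) := (eval_Erel_eq_one hexp _ _ _).mp hval
      exact ⟨j, hT.parent_eq hji hx⟩
  -- closedness
  have hcl : IsClosedSet E0 (Set.range (fun i => β (zvar i))) := by
    apply Set.Subset.antisymm _ subset_treeCl_s7
    intro a hcla
    rcases hcla with h | h | h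
    · exact h
    · obtain ⟨i0, hi0⟩ := hroot
      exact ⟨i0, (hT.root_eq hi0 h)⟩
    · obtain ⟨b, hb, hanc⟩ := h
      revert hb
      induction hanc using Relation.TransGen.head_induction_on with
      | single h' =>
          intro hb
          obtain ⟨i0, hi0⟩ := hb
          exact hpar i0 _ (by rw [show β (zvar i0) = b from hi0]; exact h')
      | head hxy hyb IH =>
          intro hb
          obtain ⟨i1, hi1⟩ := IH hb
          exact hpar i1 _ (by rw [show β (zvar i1) = _ from hi1]; exact hxy)
  refine ⟨hpat, hinj, hcl, ?_⟩
  -- closure membership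
  intro i hi
  have hq := hallC _ (List.mem_map.mpr ⟨i,
    List.mem_filter.mpr ⟨List.mem_finRange i, decide_eq_true hi⟩, rfl⟩)
  rw [eval_pOR_eq_one] at hq
  rcases hq with hq | hq
  · exact Or.inr (Or.inl (((eval_rootF hexp ha (hu i) β).1).mp hq))
  · rw [eval_bigOr_eq_one] at hq
    obtain ⟨q, hq', hval⟩ := hq
    rw [chainFmlas, List.mem_flatMap] at hq'
    obtain ⟨N, -, hq'⟩ := hq'
    obtain ⟨f, hf, rfl⟩ := List.mem_map.mp hq'
    obtain ⟨-, hdec⟩ := List.mem_filter.mp hf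
    obtain ⟨hf0, hflast⟩ := of_decide_eq_true hdec
    rw [eval_chainFml_eq_one hexp] at hval
    have htr : Relation.TransGen E0 (β (zvar (f 0))) (β (zvar (f (Fin.last (N+1))))) :=
      transChain (fun s => β (zvar (f s))) hval
    rw [hf0] at htr
    exact Or.inr (Or.inr ⟨β (zvar (f (Fin.last (N+1)))),
      ⟨f (Fin.last (N+1)), hflast, rfl⟩, htr⟩)

/-- Completeness of ψ. -/
lemma psi_complete (hT : IsTree E0) (hexp : IsExpansionOf e hE E0 S) (ha : Nonempty A)
    (hu : ∀ i, u ≠ zvar i)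
    (h1 : ∀ i j, PP e φ i j → E0 (β (zvar i)) (β (zvar j)))
    (h2 : ∀ i j, ¬ PP e φ i j → ¬ E0 (β (zvar i)) (β (zvar j)))
    (hinj : Function.Injective (fun i => β (zvar i)))
    (hcl : IsClosedSet E0 (Set.range (fun i => β (zvar i))))
    (hmem : ∀ i : Fin n, nx ≤ (i : ℕ) →
      β (zvar i) ∈ treeCl E0 ((fun i => β (zvar i)) '' {j : Fin n | (j : ℕ) < nx})) :
    eval S (psi e n nx φ zvar u) β = 1 := by
  rw [psi, eval_bigAnd_eq_one]
  intro q hq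
  rcases mem_psi_parts.mp hq with hq | hq | hq | hq | hq
  · -- edge literals
    rw [edgeLits, List.mem_flatMap] at hq
    obtain ⟨i, -, hq⟩ := hq
    obtain ⟨j, -, rfl⟩ := List.mem_map.mp hq
    by_cases hP : PP e φ i j
    · rw [if_pos hP]
      exact (eval_Erel_eq_one hexp _ _ _).mpr (h1 i j hP)
    · rw [if_neg hP, eval_pNOT_eq_one]
      apply (ZO_rel S).ne_one
      intro hone
      exact h2 i j hP ((eval_Erel_eq_one hexp _ _ _).mp hone)
  · -- inequalities
    rw [ineqLits, List.mem_flatMap] at hq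
    obtain ⟨i, -, hq⟩ := hq
    obtain ⟨j, -, rfl⟩ := List.mem_map.mp hq
    by_cases hij : i = j
    · rw [if_pos hij]; rfl
    · rw [if_neg hij, eval_pNOT_eq_one]
      apply (ZO_eqf S).ne_one
      intro hone
      exact hij (hinj (eval_eqf_eq_one.mp hone))
  · -- root clause
    subst hq
    rw [rootClause, eval_bigOr_eq_one]
    obtain ⟨r, hr⟩ := hT.exists_root
    obtain ⟨i0, hi0⟩ := hcl.mem_of_root hr
    exact ⟨rootF e (zvar i0) u, List.mem_map.mpr ⟨i0, List.mem_finRange i0, rfl⟩,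
      ((eval_rootF hexp ha (hu i0) β).1).mpr (by rw [show β (zvar i0) = r from hi0]; exact hr)⟩
  · -- parent clauses
    rw [parentClauses, List.mem_map] at hq
    obtain ⟨i, -, rfl⟩ := hq
    rw [eval_pOR_eq_one]
    by_cases hroot : IsRoot E0 (β (zvar i))
    · exact Or.inl (((eval_rootF hexp ha (hu i) β).1).mpr hroot)
    · right
      obtain ⟨b, hb, -⟩ := hT.parent_unique _ hroot
      have hbr : b ∈ Set.range (fun i => β (zvar i)) :=
        hcl.mem_of_ancestor ⟨i, rfl⟩ (Relation.TransGen.single hb)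
      obtain ⟨j, hj⟩ := hbr
      rw [eval_bigOr_eq_one]
      exact ⟨Erel e (zvar j) (zvar i), List.mem_map.mpr ⟨j, List.mem_finRange j, rfl⟩,
        (eval_Erel_eq_one hexp _ _ _).mpr (by rw [show β (zvar j) = b from hj]; exact hb)⟩
  · -- closure clauses
    rw [clClauses, List.mem_map] at hq
    obtain ⟨i, hif, rfl⟩ := hq
    obtain ⟨-, hdec⟩ := List.mem_filter.mp hif
    have hi : nx ≤ (i : ℕ) := of_decide_eq_true hdec
    rw [eval_pOR_eq_one]
    rcases hmem i hi with h | h | h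
    · obtain ⟨j, hj, hji⟩ := h
      have : i = j := hinj hji.symm
      subst this
      exact absurd hj (by simp only [Set.mem_setOf_eq]; omega)
    · exact Or.inl (((eval_rootF hexp ha (hu i) β).1).mpr h)
    · right
      obtain ⟨b, ⟨j, hj, rfl⟩, hanc⟩ := h
      obtain ⟨c, hc, hlast, hne⟩ := anc_chain hT
        (fun i j hE0 => by_contra (fun hP => h2 i j hP hE0)) hcl hanc i j rfl rfl
      rw [eval_bigOr_eq_one]
      exact chain_to_formula hT hexp h1 hj c hc hlast hne

/-- ψ is 0/1-valued. -/
lemma ZO_psi (hexp : IsExpansionOf e hE E0 S) (ha : Nonempty A) (hu : ∀ i, u ≠ zvar i) :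
    ZO (eval S (psi e n nx φ zvar u) β) := by
  apply ZO_bigAnd
  intro q hq
  rcases mem_psi_parts.mp hq with hq | hq | hq | hq | hq
  · rw [edgeLits, List.mem_flatMap] at hq
    obtain ⟨i, -, hq⟩ := hq
    obtain ⟨j, -, rfl⟩ := List.mem_map.mp hq
    split
    · exact ZO_rel S
    · exact ZO_pNOT S (ZO_rel S)
  · rw [ineqLits, List.mem_flatMap] at hq
    obtain ⟨i, -, hq⟩ := hq
    obtain ⟨j, -, rfl⟩ := List.mem_map.mp hq
    split
    · left; rfl
    · exact ZO_pNOT S (ZO_eqf S)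
  · subst hq
    rw [rootClause]
    apply ZO_bigOr
    intro q hq
    obtain ⟨i, -, rfl⟩ := List.mem_map.mp hq
    exact (eval_rootF hexp ha (hu i) β).2
  · rw [parentClauses, List.mem_map] at hq
    obtain ⟨i, -, rfl⟩ := hq
    apply ZO_pOR
    · exact (eval_rootF hexp ha (hu i) β).2
    · apply ZO_bigOr
      intro q hq
      obtain ⟨j, -, rfl⟩ := List.mem_map.mp hq
      exact ZO_rel S
  · rw [clClauses, List.mem_map] at hq
    obtain ⟨i, -, rfl⟩ := hq
    apply ZO_pOR
    · exact (eval_rootF hexp ha (hu i) β).2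
    · apply ZO_bigOr
      intro q hq
      rw [chainFmlas, List.mem_flatMap] at hq
      obtain ⟨N, -, hq⟩ := hq
      obtain ⟨f, -, rfl⟩ := List.mem_map.mp hq
      rw [chainFml]
      apply ZO_bigAnd
      intro q hq
      obtain ⟨s, -, rfl⟩ := List.mem_map.mp hq
      exact ZO_rel S

end PsiSem
end PaperTrees


open Classical
noncomputable section
namespace PaperTrees

variable {σ : Type} {ar : σ → ℕ}

/-! ### free variable bounds -/

lemma fv_pNOT (q : PLA σ ar) : freeVars (pNOT q) ⊆ freeVars q := by
  rw [pNOT]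
  show (⋃ i : Fin 1, freeVars q) ⊆ _
  exact Set.iUnion_subset fun _ => subset_rfl

lemma fv_pAND (a b : PLA σ ar) : freeVars (pAND a b) ⊆ freeVars a ∪ freeVars b := by
  rw [pAND]
  show (⋃ i : Fin 2, freeVars (if i = 0 then a else b)) ⊆ _
  apply Set.iUnion_subset
  intro i
  by_cases h : i = 0 <;> simp [h]

lemma fv_pOR (a b : PLA σ ar) : freeVars (pOR a b) ⊆ freeVars a ∪ freeVars b := by
  rw [pOR]
  show (⋃ i : Fin 2, freeVars (if i = 0 then a else b)) ⊆ _
  apply Set.iUnion_subset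
  intro i
  by_cases h : i = 0 <;> simp [h]

lemma fv_bigAnd (l : List (PLA σ ar)) :
    freeVars (bigAnd l) ⊆ {v | ∃ q ∈ l, v ∈ freeVars q} := by
  induction l with
  | nil => rw [bigAnd]; show (∅ : Set ℕ) ⊆ _; simp
  | cons q l ih =>
      rw [bigAnd]
      refine (fv_pAND _ _).trans ?_
      intro v hv
      rcases hv with hv | hv
      · exact ⟨q, List.mem_cons_self, hv⟩
      · obtain ⟨q', hq', hv'⟩ := ih hv
        exact ⟨q', List.mem_cons_of_mem _ hq', hv'⟩

lemma fv_bigOr (l : List (PLA σ ar)) :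
    freeVars (bigOr l) ⊆ {v | ∃ q ∈ l, v ∈ freeVars q} := by
  induction l with
  | nil => rw [bigOr]; show (∅ : Set ℕ) ⊆ _; simp
  | cons q l ih =>
      rw [bigOr]
      refine (fv_pOR _ _).trans ?_
      intro v hv
      rcases hv with hv | hv
      · exact ⟨q, List.mem_cons_self, hv⟩
      · obtain ⟨q', hq', hv'⟩ := ih hv
        exact ⟨q', List.mem_cons_of_mem _ hq', hv'⟩

lemma fv_Erel (e : σ) (a b : ℕ) : freeVars (Erel (ar := ar) e a b) ⊆ {a, b} := by
  rw [Erel]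
  show Set.range _ ⊆ _
  rintro v ⟨i, rfl⟩
  by_cases h : (i : ℕ) = 0 <;> simp [h]

lemma fv_eqf (a b : ℕ) : freeVars (.eqf (σ := σ) (ar := ar) a b) ⊆ {a, b} := by
  rw [freeVars]

lemma fv_existsParent (e : σ) (a u : ℕ) :
    freeVars (existsParent (ar := ar) e a u) ⊆ {a} := by
  rw [existsParent]
  show ((⋃ _ : Fin 1, freeVars (Erel (ar := ar) e u a)) ∪
      ⋃ _ : Fin 1, freeVars (.const (σ := σ) (ar := ar) 1)) \ {v | v ∈ [u]} ⊆ _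
  intro v hv
  obtain ⟨hv1, hv2⟩ := hv
  simp only [List.mem_singleton, Set.mem_setOf_eq] at hv2
  rcases hv1 with hv1 | hv1
  · obtain ⟨_, hv1⟩ := Set.mem_iUnion.mp hv1
    have := fv_Erel e u a hv1
    rcases this with h | h
    · exact absurd h hv2
    · exact h
  · obtain ⟨_, hv1⟩ := Set.mem_iUnion.mp hv1
    exact absurd hv1 (by rw [freeVars]; exact Set.notMem_empty v)

lemma fv_rootF (e : σ) (a u : ℕ) : freeVars (rootF (ar := ar) e a u) ⊆ {a} :=
  (fv_pNOT _).trans (fv_existsParent e a u)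

lemma fv_psi (e : σ) (n nx : ℕ) (φ : AtomicTypeData σ ar n) (zvar : Fin n → ℕ) (u : ℕ) :
    freeVars (psi e n nx φ zvar u) ⊆ {w | ∃ i, w = zvar i} := by
  rw [psi]
  refine (fv_bigAnd _).trans ?_
  rintro v ⟨q, hq, hv⟩
  rcases mem_psi_parts.mp hq with hq | hq | hq | hq | hq
  · rw [edgeLits, List.mem_flatMap] at hq
    obtain ⟨i, -, hq⟩ := hq
    obtain ⟨j, -, rfl⟩ := List.mem_map.mp hq
    have : v ∈ ({zvar i, zvar j} : Set ℕ) := by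
      split at hv
      · exact fv_Erel e _ _ hv
      · exact fv_Erel e _ _ ((fv_pNOT _) hv)
    rcases this with h | h
    · exact ⟨i, h⟩
    · exact ⟨j, h⟩
  · rw [ineqLits, List.mem_flatMap] at hq
    obtain ⟨i, -, hq⟩ := hq
    obtain ⟨j, -, rfl⟩ := List.mem_map.mp hq
    have : v ∈ ({zvar i, zvar j} : Set ℕ) := by
      split at hv
      · exact absurd hv (by rw [freeVars]; exact Set.notMem_empty v)
      · exact fv_eqf _ _ ((fv_pNOT _) hv)
    rcases this with h | h
    · exact ⟨i, h⟩
    · exact ⟨j, h⟩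
  · subst hq
    rw [rootClause] at hv
    obtain ⟨q, hq, hv⟩ := fv_bigOr _ hv
    obtain ⟨i, -, rfl⟩ := List.mem_map.mp hq
    exact ⟨i, fv_rootF e _ u hv⟩
  · rw [parentClauses, List.mem_map] at hq
    obtain ⟨i, -, rfl⟩ := hq
    rcases (fv_pOR _ _) hv with hv | hv
    · exact ⟨i, fv_rootF e _ u hv⟩
    · obtain ⟨q, hq, hv⟩ := fv_bigOr _ hv
      obtain ⟨j, -, rfl⟩ := List.mem_map.mp hq
      rcases fv_Erel e _ _ hv with h | h
      · exact ⟨j, h⟩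
      · exact ⟨i, h⟩
  · rw [clClauses, List.mem_map] at hq
    obtain ⟨i, -, rfl⟩ := hq
    rcases (fv_pOR _ _) hv with hv | hv
    · exact ⟨i, fv_rootF e _ u hv⟩
    · obtain ⟨q, hq, hv⟩ := fv_bigOr _ hv
      rw [chainFmlas, List.mem_flatMap] at hq
      obtain ⟨N, -, hq⟩ := hq
      obtain ⟨f, -, rfl⟩ := List.mem_map.mp hq
      rw [chainFml] at hv
      obtain ⟨q, hq, hv⟩ := fv_bigAnd _ hv
      obtain ⟨s, -, rfl⟩ := List.mem_map.mp hq
      rcases fv_Erel e _ _ hv with h | h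
      · exact ⟨_, h⟩
      · exact ⟨_, h⟩

end PaperTrees

namespace PaperTrees
variable {σ : Type} {ar : σ → ℕ}
variable {A : Type} [Fintype A] {S : Struc σ ar A}

/-! ### updMany splitting along an append -/

lemma updMany_append {β : ℕ → A} {us ys : List ℕ} (hnd : (us ++ ys).Nodup)
    (t' : Fin (us ++ ys).length → A) :
    updMany β (us ++ ys) t' =
      updMany (updMany β us
          (fun i => t' (Fin.cast (List.length_append (as := us) (bs := ys)).symm (Fin.castAdd ys.length i))))
        ys (fun k => t' (Fin.cast (List.length_append (as := us) (bs := ys)).symm (Fin.natAdd us.length k))) := by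
  classical
  rw [List.nodup_append'] at hnd
  funext v
  by_cases hy : v ∈ ys
  · have hvus : v ∉ us := fun hv => hnd.2.2 hv hy
    rw [updMany_eq_of_mem (List.mem_append.mpr (Or.inr hy)), updMany_eq_of_mem hy]
    apply congrArg t'
    apply Fin.ext
    show List.idxOf v (us ++ ys) = us.length + List.idxOf v ys
    exact List.idxOf_append_of_notMem hvus
  · by_cases hu : v ∈ us
    · rw [updMany_eq_of_mem (List.mem_append.mpr (Or.inl hu)), updMany_eq_of_not_mem hy,
        updMany_eq_of_mem hu]
      apply congrArg t'
      apply Fin.ext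
      show List.idxOf v (us ++ ys) = (List.idxOf v us : ℕ)
      exact List.idxOf_append_of_mem hu
    · rw [updMany_eq_of_not_mem (fun h => (List.mem_append.mp h).elim hu hy),
        updMany_eq_of_not_mem hy, updMany_eq_of_not_mem hu]

/-! ### counting via the unique witness -/

lemma count_bij {p p' : PLA σ ar} {ys : List ℕ}
    (haE : ∀ γ : ℕ → A, eval S p γ = 1 ↔ ∃ b : Fin ys.length → A,
      eval S p' (updMany γ ys b) = 1)
    (haU : ∀ (γ : ℕ → A) (b b' : Fin ys.length → A), eval S p' (updMany γ ys b) = 1 →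
      eval S p' (updMany γ ys b') = 1 → b = b')
    (us : List ℕ) (hnd : (us ++ ys).Nodup) (β : ℕ → A) :
    Set.ncard {t : Fin us.length → A | eval S p (updMany β us t) = 1} =
    Set.ncard {t' : Fin (us ++ ys).length → A | eval S p' (updMany β (us ++ ys) t') = 1} := by
  classical
  set hl := List.length_append (as := us) (bs := ys) with hhl
  set F : (Fin (us ++ ys).length → A) → (Fin us.length → A) :=
    fun t' i => t' (Fin.cast hl.symm (Fin.castAdd ys.length i)) with hF
  set G : (Fin (us ++ ys).length → A) → (Fin ys.length → A) :=
    fun t' k => t' (Fin.cast hl.symm (Fin.natAdd us.length k)) with hG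
  have key : ∀ t', updMany β (us ++ ys) t' = updMany (updMany β us (F t')) ys (G t') :=
    fun t' => updMany_append hnd t'
  have recon : ∀ t1 t2 : Fin (us ++ ys).length → A, F t1 = F t2 → G t1 = G t2 → t1 = t2 := by
    intro t1 t2 h1 h2
    funext i
    have h3 : t1 (Fin.cast hl.symm (Fin.cast hl i)) = t2 (Fin.cast hl.symm (Fin.cast hl i)) := by
      refine Fin.addCases (motive := fun i' => t1 (Fin.cast hl.symm i') = t2 (Fin.cast hl.symm i'))
        ?_ ?_ (Fin.cast hl i)
      · intro j; exact congrFun h1 j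
      · intro k; exact congrFun h2 k
    rwa [show Fin.cast hl.symm (Fin.cast hl i) = i from Fin.ext (by simp)] at h3
  have himg : F '' {t' : Fin (us ++ ys).length → A | eval S p' (updMany β (us ++ ys) t') = 1}
      = {t : Fin us.length → A | eval S p (updMany β us t) = 1} := by
    ext tx
    constructor
    · rintro ⟨t', ht', rfl⟩
      show eval S p (updMany β us (F t')) = 1
      refine (haE _).mpr ⟨G t', ?_⟩
      rw [← key t']
      exact ht'
    · intro htx
      obtain ⟨b, hb⟩ := (haE (updMany β us tx)).mp htx
      set t' : Fin (us ++ ys).length → A :=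
        fun i => Fin.addCases (motive := fun _ => A) tx b (Fin.cast hl i) with ht'
      have hFt : F t' = tx := by
        funext i
        show Fin.addCases (motive := fun _ => A) tx b
          (Fin.cast hl (Fin.cast hl.symm (Fin.castAdd ys.length i))) = tx i
        rw [show Fin.cast hl (Fin.cast hl.symm (Fin.castAdd ys.length i))
          = Fin.castAdd ys.length i from Fin.ext (by simp)]
        exact Fin.addCases_left i
      have hGt : G t' = b := by
        funext k
        show Fin.addCases (motive := fun _ => A) tx b
          (Fin.cast hl (Fin.cast hl.symm (Fin.natAdd us.length k))) = b k
        rw [show Fin.cast hl (Fin.cast hl.symm (Fin.natAdd us.length k))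
          = Fin.natAdd us.length k from Fin.ext (by simp)]
        exact Fin.addCases_right k
      refine ⟨t', ?_, hFt⟩
      show eval S p' (updMany β (us ++ ys) t') = 1
      rw [key t', hFt, hGt]
      exact hb
  have hinj : Set.InjOn F
      {t' : Fin (us ++ ys).length → A | eval S p' (updMany β (us ++ ys) t') = 1} := by
    intro t1 h1 t2 h2 h12
    apply recon t1 t2 h12
    have e1 : eval S p' (updMany (updMany β us (F t1)) ys (G t1)) = 1 := by
      rw [← key t1]; exact h1
    have e2 : eval S p' (updMany (updMany β us (F t1)) ys (G t2)) = 1 := by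
      rw [h12, ← key t2]; exact h2
    exact haU _ _ _ e1 e2
  rw [← himg, Set.ncard_image_of_injOn hinj]

/-! ### remapping atomic type data along an index bijection -/

def remapData {n n' : ℕ} (f : Fin n → Fin n') (φ : AtomicTypeData σ ar n) :
    AtomicTypeData σ ar n' :=
  ⟨(fun l : (R : σ) × (Fin (ar R) → Fin n) =>
      (⟨l.1, fun s => f (l.2 s)⟩ : (R : σ) × (Fin (ar R) → Fin n'))) '' φ.pos,
   (fun l : (R : σ) × (Fin (ar R) → Fin n) =>
      (⟨l.1, fun s => f (l.2 s)⟩ : (R : σ) × (Fin (ar R) → Fin n'))) '' φ.neg⟩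

lemma satAtomic_remap {n n' : ℕ} (g : Fin n ≃ Fin n') (φ : AtomicTypeData σ ar n)
    (t : Fin n' → A) :
    satAtomic S (remapData g φ) t ↔ satAtomic S φ (fun i => t (g i)) := by
  rw [satAtomic, satAtomic, remapData]
  simp only [Set.forall_mem_image]
  refine and_congr Iff.rfl (and_congr Iff.rfl ?_)
  constructor
  · exact fun h => h.comp (fun a b hab => g.injective (by simpa using hab))
  · intro h a b hab
    have h2 : g.symm a = g.symm b := h (by simpa using hab)
    simpa using congrArg g h2

lemma pairTup_remap {n n' : ℕ} (e : σ) (g : Fin n ≃ Fin n') (i j : Fin n) :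
    (fun s => g (pairTup (ar := ar) e i j s)) = pairTup (ar := ar) e (g i) (g j) := by
  funext s
  rw [pairTup, pairTup, apply_ite g]

/-! ### interpreting E-literals of an atomic type -/

section Pair
variable {e : σ} {hE : ar e = 2} {E0 : A → A → Prop}

lemma pairTup_spec (hexp : IsExpansionOf e hE E0 S) {n : ℕ} (t : Fin n → A) (i j : Fin n) :
    (S e (fun s => t (pairTup e i j s)) = true) ↔ E0 (t i) (t j) := by
  have h := hexp (fun s => t (pairTup e i j s))
  rw [h]
  rw [show pairTup e i j (Fin.cast hE.symm 0) = i from by rw [pairTup]; simp,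
    show pairTup e i j (Fin.cast hE.symm 1) = j from by rw [pairTup]; simp]

lemma satE (hexp : IsExpansionOf e hE E0 S) {n : ℕ} {φ : AtomicTypeData σ ar n}
    {t : Fin n → A} (hsat : satAtomic S φ t)
    (hdec : ∀ i j : Fin n, (⟨e, pairTup e i j⟩ : (R : σ) × (Fin (ar R) → Fin n)) ∈ φ.pos ∨
      (⟨e, pairTup e i j⟩ : (R : σ) × (Fin (ar R) → Fin n)) ∈ φ.neg) (i j : Fin n) :
    E0 (t i) (t j) ↔ (⟨e, pairTup e i j⟩ : (R : σ) × (Fin (ar R) → Fin n)) ∈ φ.pos := by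
  constructor
  · intro hE0
    rcases hdec i j with h | h
    · exact h
    · have hfalse : S e (fun s => t (pairTup e i j s)) = false := hsat.2.1 _ h
      have htrue := (pairTup_spec hexp t i j).mpr hE0
      rw [htrue] at hfalse
      exact absurd hfalse (by simp)
  · intro h
    exact (pairTup_spec hexp t i j).mp (hsat.1 _ h)

end Pair
end PaperTrees

namespace PaperTrees
variable {σ : Type} {ar : σ → ℕ} {A : Type}

lemma append_zero {L : ℕ} (u : Fin L → A) (w : Fin 0 → A) :
    Fin.append u w = fun i : Fin (L + 0) => u (Fin.cast (Nat.add_zero L) i) := by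
  funext i
  refine Fin.addCases (motive := fun i : Fin (L + 0) =>
    Fin.append u w i = u (Fin.cast (Nat.add_zero L) i)) ?_ (fun k => k.elim0) i
  intro j
  rw [Fin.append_left]
  exact congrArg u (Fin.ext rfl)

lemma im_eq {nx m : ℕ} (t : Fin (nx + m) → A) :
    t '' {j : Fin (nx + m) | (j : ℕ) < nx} = Set.range (fun j : Fin nx => t (Fin.castAdd m j)) := by
  ext a
  constructor
  · rintro ⟨j, hj, rfl⟩
    exact ⟨⟨(j : ℕ), hj⟩, congrArg t (Fin.ext rfl)⟩
  · rintro ⟨j, rfl⟩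
    exact ⟨Fin.castAdd m j, j.2, rfl⟩

lemma image_mem_list (β : ℕ → A) (l : List ℕ) :
    β '' {v | v ∈ l} = Set.range (xtuple β l) := by
  ext a
  constructor
  · rintro ⟨v, hv, rfl⟩
    obtain ⟨i, hi⟩ := List.mem_iff_get.mp hv
    exact ⟨i, by rw [xtuple, hi]⟩
  · rintro ⟨i, rfl⟩
    exact ⟨l.get i, List.get_mem l i, rfl⟩

lemma le_foldr_max : ∀ (l : List ℕ) (v : ℕ), v ∈ l → v ≤ l.foldr max 0 := by
  intro l
  induction l with
  | nil => intro v hv; cases hv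
  | cons a l ih =>
      intro v hv
      rcases List.mem_cons.mp hv with rfl | hv
      · exact le_max_left _ _
      · exact le_trans (ih v hv) (le_max_right _ _)

end PaperTrees


open Classical Filter
noncomputable section

namespace PaperTrees

theorem statement_7'
    {σ : Type} {ar : σ → ℕ} (e : σ) (hE : ar e = 2) (Δ : ℕ) (hΔ : 0 < Δ)
    (p : PLA σ ar) (xs : List ℕ) (hp : IsClosureType e hE Δ p xs) :
    ∃ (ys : List ℕ) (p' : PLA σ ar),
      (xs ++ ys).Nodup ∧
      IsClosureType e hE Δ p' (xs ++ ys) ∧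
      SelfContained e hE Δ p' (xs ++ ys) ∧
      ∀ (A : Type) (_ : Fintype A) (S : Struc σ ar A), ExpandsTreeLe e hE Δ S →
        (∀ β : ℕ → A, (eval S p β = 1 ↔
            ∃! b : Fin ys.length → A, eval S p' (updMany β ys b) = 1)) ∧
        (∀ β : ℕ → A,
          Set.ncard {t : Fin xs.length → A | eval S p (updMany β xs t) = 1} =
          Set.ncard {t : Fin (xs ++ ys).length → A | eval S p' (updMany β (xs ++ ys) t) = 1}) ∧
        (∀ k : ℕ, k ≤ xs.length → ∀ β : ℕ → A,
          Set.ncard {t : Fin (xs.drop k).length → A | eval S p (updMany β (xs.drop k) t) = 1} =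
          Set.ncard {t : Fin ((xs.drop k) ++ ys).length → A |
            eval S p' (updMany β ((xs.drop k) ++ ys) t) = 1}) := by
  classical
  obtain ⟨hndxs, hfvp, m, φ, hAT, hcond2, hcond3⟩ := hp
  have hdec := hAT.1
  -- fresh variables
  set B : ℕ := xs.foldr max 0 + 1 with hB
  set ys : List ℕ := (List.range m).map (fun k => k + B) with hys
  set u : ℕ := B + m with hudef
  have hlys : ys.length = m := by simp [hys]
  have hxB : ∀ v ∈ xs, v < B := fun v hv => by
    have := le_foldr_max xs v hv; omega
  have hyB : ∀ v ∈ ys, B ≤ v ∧ v < B + m := by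
    intro v hv
    rw [hys, List.mem_map] at hv
    obtain ⟨k, hk, rfl⟩ := hv
    rw [List.mem_range] at hk
    omega
  have hndys : ys.Nodup := by
    rw [hys]
    exact (List.nodup_range (n := m)).map (add_left_injective B)
  have hdisjoint : List.Disjoint xs ys := fun v hvx hvy => by
    have h1 := hxB v hvx
    have h2 := (hyB v hvy).1
    omega
  have hnd : (xs ++ ys).Nodup := List.nodup_append'.mpr ⟨hndxs, hndys, hdisjoint⟩
  have hlen : (xs ++ ys).length = xs.length + m := by simp [hlys]
  set zvar : Fin (xs.length + m) → ℕ := fun i => (xs ++ ys).get (Fin.cast hlen.symm i)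
    with hzvar
  have hzmem : ∀ i, zvar i ∈ xs ++ ys := fun i => List.get_mem _ _
  have huf : ∀ i, u ≠ zvar i := by
    intro i he
    rcases List.mem_append.mp (hzmem i) with h | h
    · have := hxB _ h; omega
    · have := (hyB _ h).2; omega
  have hz1 : ∀ (i : Fin (xs.length + m)) (hi : (i : ℕ) < xs.length),
      zvar i = xs.get ⟨(i : ℕ), hi⟩ := by
    intro i hi
    show (xs ++ ys)[((Fin.cast hlen.symm i) : ℕ)] = xs[(i : ℕ)]
    exact List.getElem_append_left hi
  have hz1mem : ∀ (i : Fin (xs.length + m)), (i : ℕ) < xs.length → zvar i ∈ xs := by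
    intro i hi
    rw [hz1 i hi]
    exact List.get_mem _ _
  have hz1ys : ∀ (i : Fin (xs.length + m)), (i : ℕ) < xs.length → zvar i ∉ ys :=
    fun i hi h => hdisjoint (hz1mem i hi) h
  have hz2 : ∀ (k : Fin m), zvar (Fin.natAdd xs.length k) = ys.get (Fin.cast hlys.symm k) := by
    intro k
    have h₂ : xs.length + (k : ℕ) < (xs ++ ys).length := by rw [hlen]; omega
    have hgar : (xs ++ ys).get ⟨xs.length + (k : ℕ), h₂⟩
        = ys.get ⟨xs.length + (k : ℕ) - xs.length, by omega⟩ :=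
      List.getElem_append_right (by omega)
    show (xs ++ ys).get (Fin.cast hlen.symm (Fin.natAdd xs.length k)) = _
    rw [show (Fin.cast hlen.symm (Fin.natAdd xs.length k))
      = (⟨xs.length + (k : ℕ), h₂⟩ : Fin (xs ++ ys).length) from Fin.ext rfl]
    rw [hgar]
    congr 1
    apply Fin.ext
    show xs.length + (k : ℕ) - xs.length = (k : ℕ)
    omega
  -- the formulas
  set ψ : PLA σ ar := psi e (xs.length + m) xs.length φ zvar u with hψdef
  set p' : PLA σ ar := pAND p ψ with hp'def
  -- the index bijection for the remapped atomic type
  set g : Fin (xs.length + m) ≃ Fin ((xs ++ ys).length) := finCongr hlen.symm with hg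
  -- ======= the central characterization =======
  have CHAR : ∀ (A : Type) (inst : Fintype A) (S : Struc σ ar A) (E0 : A → A → Prop),
      IsTree E0 → HeightLe E0 Δ → IsExpansionOf e hE E0 S → ∀ β : ℕ → A,
      (eval S p' β = 1 ↔ (satAtomic S φ (fun i => β (zvar i)) ∧
        IsClosedSet E0 (Set.range (fun i => β (zvar i))))) ∧
      (eval S p' β = 1 ∨ eval S p' β = 0) := by
    intro A inst S E0 hT hH hexp β
    have ha : Nonempty A := by
      obtain ⟨r, hr⟩ := hT.exists_root
      exact ⟨r⟩
    have hZOp : ZO (eval S p β) := (hcond3 A inst S E0 hT hH hexp β).1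
    have hiffp := (hcond3 A inst S E0 hT hH hexp β).2
    have hclmem : ∀ {t : Fin (xs.length + m) → A}, satAtomic S φ t →
        ∀ i : Fin (xs.length + m), xs.length ≤ (i : ℕ) →
          t i ∈ treeCl E0 (t '' {j : Fin (xs.length + m) | (j : ℕ) < xs.length}) := by
      intro t hsat i hi
      have hk := hcond2 A inst S E0 hT hH hexp t hsat ⟨(i : ℕ) - xs.length, by omega⟩
      rw [im_eq]
      have hrepr : Fin.natAdd xs.length ⟨(i : ℕ) - xs.length, by omega⟩ = i :=
        Fin.ext (by simp; omega)
      rwa [hrepr] at hk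
    constructor
    · rw [hp'def, eval_pAND_eq_one]
      constructor
      · rintro ⟨hevp, hevψ⟩
        obtain ⟨hpat, hinj, hcl, hmem⟩ := psi_sound hT hexp ha huf hevψ
        obtain ⟨w, hsatw, hclw⟩ := hiffp.mp hevp
        have hpat₀ := satE hexp hsatw hdec
        have hx : ∀ (i : Fin (xs.length + m)), (i : ℕ) < xs.length →
            β (zvar i) = Fin.append (xtuple β xs) w i := by
          intro i hi
          have hrepr : i = Fin.castAdd m ⟨(i : ℕ), hi⟩ := Fin.ext rfl
          rw [hz1 i hi]
          conv_rhs => rw [hrepr]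
          rw [Fin.append_left]
          rfl
        have hteq : (fun i => β (zvar i)) = Fin.append (xtuple β xs) w :=
          tuple_unique hT hpat hpat₀ hx hinj hsatw.2.2 hcl hclw hmem (hclmem hsatw)
        rw [hteq]
        exact ⟨hsatw, hclw⟩
      · rintro ⟨hsat, hcl⟩
        have happ : Fin.append (xtuple β xs)
            (fun k : Fin m => β (zvar (Fin.natAdd xs.length k))) = fun i => β (zvar i) := by
          funext i
          refine Fin.addCases (motive := fun i : Fin (xs.length + m) =>
            Fin.append (xtuple β xs)
              (fun k : Fin m => β (zvar (Fin.natAdd xs.length k))) i = β (zvar i)) ?_ ?_ i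
          · intro j
            rw [Fin.append_left]
            rw [hz1 (Fin.castAdd m j) j.2]
            rfl
          · intro k
            rw [Fin.append_right]
        constructor
        · apply hiffp.mpr
          refine ⟨fun k : Fin m => β (zvar (Fin.natAdd xs.length k)), ?_, ?_⟩
          · rw [happ]; exact hsat
          · rw [happ]; exact hcl
        · exact psi_complete hT hexp ha huf
            (fun i j hP => (satE hexp hsat hdec i j).mpr hP)
            (fun i j hP hE0 => hP ((satE hexp hsat hdec i j).mp hE0))
            hsat.2.2 hcl (hclmem hsat)
    · exact ZO_pAND S hZOp (ZO_psi hexp ha huf)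
  -- hoisted closure-membership fact
  have hclmem : ∀ (A : Type) (inst : Fintype A) (S : Struc σ ar A) (E0 : A → A → Prop),
      IsTree E0 → HeightLe E0 Δ → IsExpansionOf e hE E0 S →
      ∀ {t : Fin (xs.length + m) → A}, satAtomic S φ t →
      ∀ i : Fin (xs.length + m), xs.length ≤ (i : ℕ) →
        t i ∈ treeCl E0 (t '' {j : Fin (xs.length + m) | (j : ℕ) < xs.length}) := by
    intro A inst S E0 hT hH hexp t hsat i hi
    have hk := hcond2 A inst S E0 hT hH hexp t hsat ⟨(i : ℕ) - xs.length, by omega⟩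
    rw [im_eq]
    have hrepr : Fin.natAdd xs.length ⟨(i : ℕ) - xs.length, by omega⟩ = i :=
      Fin.ext (by simp; omega)
    rwa [hrepr] at hk
  -- uniqueness of the witness
  have haU : ∀ (A : Type) (inst : Fintype A) (S : Struc σ ar A) (E0 : A → A → Prop),
      IsTree E0 → HeightLe E0 Δ → IsExpansionOf e hE E0 S →
      ∀ (γ : ℕ → A) (b b' : Fin ys.length → A), eval S p' (updMany γ ys b) = 1 →
        eval S p' (updMany γ ys b') = 1 → b = b' := by
    intro A inst S E0 hT hH hexp γ b b' h1 h2
    obtain ⟨hs1, hc1⟩ := (CHAR A inst S E0 hT hH hexp _).1.mp h1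
    obtain ⟨hs2, hc2⟩ := (CHAR A inst S E0 hT hH hexp _).1.mp h2
    have hx : ∀ (i : Fin (xs.length + m)), (i : ℕ) < xs.length →
        updMany γ ys b (zvar i) = updMany γ ys b' (zvar i) := by
      intro i hi
      rw [updMany_eq_of_not_mem (hz1ys i hi), updMany_eq_of_not_mem (hz1ys i hi)]
    have hteq := tuple_unique hT (satE hexp hs1 hdec) (satE hexp hs2 hdec) hx
      hs1.2.2 hs2.2.2 hc1 hc2
      (hclmem A inst S E0 hT hH hexp hs1) (hclmem A inst S E0 hT hH hexp hs2)
    funext k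
    have e1 : updMany γ ys b (zvar (Fin.natAdd xs.length (Fin.cast hlys k))) = b k := by
      rw [hz2, updMany_get hndys]
      exact congrArg b (Fin.ext rfl)
    have e2 : updMany γ ys b' (zvar (Fin.natAdd xs.length (Fin.cast hlys k))) = b' k := by
      rw [hz2, updMany_get hndys]
      exact congrArg b' (Fin.ext rfl)
    rw [← e1, ← e2]
    exact congrFun hteq (Fin.natAdd xs.length (Fin.cast hlys k))
  -- existence of the witness
  have haE : ∀ (A : Type) (inst : Fintype A) (S : Struc σ ar A) (E0 : A → A → Prop),
      IsTree E0 → HeightLe E0 Δ → IsExpansionOf e hE E0 S →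
      ∀ γ : ℕ → A, (eval S p γ = 1 ↔
        ∃ b : Fin ys.length → A, eval S p' (updMany γ ys b) = 1) := by
    intro A inst S E0 hT hH hexp γ
    constructor
    · intro h
      obtain ⟨w, hsatw, hclw⟩ := (hcond3 A inst S E0 hT hH hexp γ).2.mp h
      refine ⟨fun k => w (Fin.cast hlys k), ?_⟩
      apply (CHAR A inst S E0 hT hH hexp _).1.mpr
      have hTt : (fun i => updMany γ ys (fun k => w (Fin.cast hlys k)) (zvar i))
          = Fin.append (xtuple γ xs) w := by
        funext i
        refine Fin.addCases (motive := fun i : Fin (xs.length + m) =>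
          updMany γ ys (fun k => w (Fin.cast hlys k)) (zvar i)
            = Fin.append (xtuple γ xs) w i) ?_ ?_ i
        · intro j
          rw [Fin.append_left, updMany_eq_of_not_mem (hz1ys _ j.2), hz1 _ j.2]
          rfl
        · intro k
          rw [Fin.append_right, hz2 k, updMany_get hndys]
          exact congrArg w (Fin.ext rfl)
      rw [hTt]
      exact ⟨hsatw, hclw⟩
    · rintro ⟨b, hb⟩
      obtain ⟨hsat, hcl⟩ := (CHAR A inst S E0 hT hH hexp _).1.mp hb
      apply (hcond3 A inst S E0 hT hH hexp γ).2.mpr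
      have hTt : Fin.append (xtuple γ xs)
          (fun k => updMany γ ys b (zvar (Fin.natAdd xs.length k)))
          = fun i => updMany γ ys b (zvar i) := by
        funext i
        refine Fin.addCases (motive := fun i : Fin (xs.length + m) =>
          Fin.append (xtuple γ xs)
            (fun k => updMany γ ys b (zvar (Fin.natAdd xs.length k))) i
            = updMany γ ys b (zvar i)) ?_ ?_ i
        · intro j
          rw [Fin.append_left, updMany_eq_of_not_mem (hz1ys _ j.2), hz1 _ j.2]
          rfl
        · intro k
          rw [Fin.append_right]
      refine ⟨fun k => updMany γ ys b (zvar (Fin.natAdd xs.length k)), ?_, ?_⟩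
      · rw [hTt]; exact hsat
      · rw [hTt]; exact hcl
  -- assemble
  refine ⟨ys, p', hnd, ⟨hnd, ?_, 0, remapData g φ, ⟨?_, ?_⟩, ?_, ?_⟩, ?_, ?_⟩
  · -- free variables of p'
    intro v hv
    rcases fv_pAND p ψ hv with hv | hv
    · exact List.mem_append.mpr (Or.inl (hfvp hv))
    · obtain ⟨i, rfl⟩ := fv_psi e _ _ φ zvar u hv
      exact hzmem i
  · -- φ' decides E-literals
    intro i j
    rcases hdec (g.symm i) (g.symm j) with h | h
    · left
      refine ⟨⟨e, pairTup e (g.symm i) (g.symm j)⟩, h, ?_⟩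
      show (⟨e, fun s => g (pairTup (ar := ar) e (g.symm i) (g.symm j) s)⟩ :
        (R : σ) × (Fin (ar R) → Fin ((xs ++ ys).length))) = ⟨e, pairTup e i j⟩
      rw [pairTup_remap]
      simp
    · right
      refine ⟨⟨e, pairTup e (g.symm i) (g.symm j)⟩, h, ?_⟩
      show (⟨e, fun s => g (pairTup (ar := ar) e (g.symm i) (g.symm j) s)⟩ :
        (R : σ) × (Fin (ar R) → Fin ((xs ++ ys).length))) = ⟨e, pairTup e i j⟩
      rw [pairTup_remap]
      simp
  · -- φ' satisfiable
    obtain ⟨A₀, i₀, S₀, t₀, hexp₀, hsat₀⟩ := hAT.2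
    refine ⟨A₀, i₀, S₀, fun i => t₀ (g.symm i), hexp₀, ?_⟩
    refine (satAtomic_remap g φ (fun i => t₀ (g.symm i))).mpr ?_
    simpa using hsat₀
  · -- cond2 for m' = 0
    intro A inst S E0 hT hH hexp t hsat i
    exact i.elim0
  · -- cond3 for p'
    intro A inst S E0 hT hH hexp β
    have hCH := CHAR A inst S E0 hT hH hexp β
    refine ⟨hCH.2, ?_⟩
    have hW : ∀ w : Fin 0 → A,
        (satAtomic S (remapData g φ) (Fin.append (xtuple β (xs ++ ys)) w) ↔
          satAtomic S φ (fun i => β (zvar i))) ∧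
        Set.range (Fin.append (xtuple β (xs ++ ys)) w)
          = Set.range (fun i => β (zvar i)) := by
      intro w
      rw [append_zero]
      constructor
      · exact satAtomic_remap g φ _
      · ext a
        constructor
        · rintro ⟨i, rfl⟩
          exact ⟨Fin.cast hlen (Fin.cast (Nat.add_zero _) i), rfl⟩
        · rintro ⟨i, rfl⟩
          exact ⟨Fin.cast (Nat.add_zero _).symm (Fin.cast hlen.symm i), rfl⟩
    constructor
    · intro h
      obtain ⟨hsat, hcl⟩ := hCH.1.mp h
      exact ⟨Fin.elim0, ((hW Fin.elim0).1).mpr hsat,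
        by rw [(hW Fin.elim0).2]; exact hcl⟩
    · rintro ⟨w, hs, hc⟩
      exact hCH.1.mpr ⟨((hW w).1).mp hs, by rw [← (hW w).2]; exact hc⟩
  · -- self-contained
    intro A inst S E0 hT hH hexp β hev
    obtain ⟨-, hcl⟩ := (CHAR A inst S E0 hT hH hexp β).1.mp hev
    rw [image_mem_list]
    have hrg : Set.range (xtuple β (xs ++ ys)) = Set.range (fun i => β (zvar i)) := by
      ext a
      constructor
      · rintro ⟨j, rfl⟩
        exact ⟨Fin.cast hlen j, rfl⟩
      · rintro ⟨i, rfl⟩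
        exact ⟨Fin.cast hlen.symm i, rfl⟩
    rw [hrg]
    exact hcl
  · -- main equivalences
    intro A inst S hexpLe
    obtain ⟨E0, hT, hH, hexp⟩ := hexpLe
    have hU := haU A inst S E0 hT hH hexp
    have hEx := haE A inst S E0 hT hH hexp
    refine ⟨?_, ?_, ?_⟩
    · intro β
      constructor
      · intro h
        obtain ⟨b, hb⟩ := (hEx β).mp h
        exact ⟨b, hb, fun y hy => hU β y b hy hb⟩
      · rintro ⟨b, hb, -⟩
        exact (hEx β).mpr ⟨b, hb⟩
    · intro β
      exact count_bij hEx hU xs hnd β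
    · intro k hk β
      have hndk : (xs.drop k ++ ys).Nodup := List.nodup_append'.mpr
        ⟨hndxs.sublist (List.drop_sublist k xs), hndys,
          fun v hv hv' => hdisjoint (List.drop_subset k xs hv) hv'⟩
      exact count_bij hEx hU (xs.drop k) hndk β

end PaperTrees

namespace PaperTrees

/-- Lemma 5.13: for every closure type `p(x̄)` over σ there is a self-contained closure
type `p*(x̄,ȳ)` over σ such that, on every σ-structure expanding a tree of height at most
`Δ`, `p(x̄)` is equivalent to `∃! ȳ p*(x̄,ȳ)`; consequently `|p(A)| = |p*(A)|`, and for
every splitting `x̄ = ūv̄` and every `ā ∈ A^{|ū|}`, `|p(ā,A)| = |p*(ā,A)|`. -/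
theorem statement_7
    {σ : Type} {ar : σ → ℕ} (e : σ) (hE : ar e = 2) (Δ : ℕ) (hΔ : 0 < Δ)
    (p : PLA σ ar) (xs : List ℕ) (hp : IsClosureType e hE Δ p xs) :
    ∃ (ys : List ℕ) (p' : PLA σ ar),
      (xs ++ ys).Nodup ∧
      IsClosureType e hE Δ p' (xs ++ ys) ∧
      SelfContained e hE Δ p' (xs ++ ys) ∧
      ∀ (A : Type) (_ : Fintype A) (S : Struc σ ar A), ExpandsTreeLe e hE Δ S →
        (∀ β : ℕ → A, (eval S p β = 1 ↔
            ∃! b : Fin ys.length → A, eval S p' (updMany β ys b) = 1)) ∧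
        (∀ β : ℕ → A,
          Set.ncard {t : Fin xs.length → A | eval S p (updMany β xs t) = 1} =
          Set.ncard {t : Fin (xs ++ ys).length → A | eval S p' (updMany β (xs ++ ys) t) = 1}) ∧
        (∀ k : ℕ, k ≤ xs.length → ∀ β : ℕ → A,
          Set.ncard {t : Fin (xs.drop k).length → A | eval S p (updMany β (xs.drop k) t) = 1} =
          Set.ncard {t : Fin ((xs.drop k) ++ ys).length → A |
            eval S p' (updMany β ((xs.drop k) ++ ys) t) = 1}) := by
  exact statement_7' e hE Δ hΔ p xs hp

end PaperTrees
end
end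
end
end
end
end
end
end
end

section
/- Fix Δ ∈ ℕ⁺ and let τ = {E} ⊆ σ with σ finite relational; all trees considered have height at most Δ. Suppose p(x̄,ȳ,z̄) is a closure type over σ such that p implies that every entry of ȳ belongs to cl(x̄), and that z̄ is nonempty. Suppose A is a σ-structure that expands a tree and A ⊨ p(ā,b̄,c̄) ∧ p(ā,b̄',c̄') where ā ∈ A^{|x̄|}, b̄, b̄' ∈ A^{|ȳ|}, c̄, c̄' ∈ A^{|z̄|}. Then b̄ = b̄', and hence |p(ā,A)| = |p(ā,b̄,A)|, where p(ā,A) = {(b̄,c̄) : A ⊨ p(ā,b̄,c̄)} and p(ā,b̄,A) = {c̄ : A ⊨ p(ā,b̄,c̄)}. -/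
open Classical Filter
noncomputable section

namespace PaperTrees

section Statement8Helpers

variable {σ : Type} {ar : σ → ℕ} {A : Type}

/-- Directed paths of a fixed length. -/
def NPath (E0 : A → A → Prop) : ℕ → A → A → Prop
  | 0, a, b => a = b
  | (l+1), a, b => ∃ c, NPath E0 l a c ∧ E0 c b

lemma npath_unique {E0 : A → A → Prop} (ht : IsTree E0) :
    ∀ (l : ℕ) (a a' b : A), NPath E0 l a b → NPath E0 l a' b → a = a' := by
  intro l
  induction l with
  | zero =>
    intro a a' b h h'
    simp only [NPath] at h h'
    exact h.trans h'.symm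
  | succ l ih =>
    intro a a' b h h'
    simp only [NPath] at h h'
    obtain ⟨c, hc, hcb⟩ := h
    obtain ⟨c', hc', hcb'⟩ := h'
    have hroot : ¬ IsRoot E0 b := fun hr => hr c hcb
    obtain ⟨q, hq, huq⟩ := ht.parent_unique b hroot
    have hcc : c = c' := (huq c hcb).trans (huq c' hcb').symm
    exact ih a a' c hc (hcc ▸ hc')

lemma ancestor_npath {E0 : A → A → Prop} {a b : A} (h : Ancestor E0 a b) :
    ∃ l, NPath E0 (l+1) a b := by
  induction h with
  | single hab => exact ⟨0, a, rfl, hab⟩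
  | tail _ hbc ih =>
    obtain ⟨l, hl⟩ := ih
    exact ⟨l+1, _, hl, hbc⟩

variable [Fintype A] {e : σ} {hE : ar e = 2} {S : Struc σ ar A} {E0 : A → A → Prop}
  {N : ℕ} {φ : AtomicTypeData σ ar N} {t t' : Fin N → A}

lemma pair_eval (hexp : IsExpansionOf e hE E0 S) (u : Fin N → A) (k j : Fin N) :
    (S e (fun i => u (pairTup e k j i)) = true) ↔ E0 (u k) (u j) := by
  rw [hexp]
  have h0 : pairTup e k j (Fin.cast hE.symm 0) = k := by
    simp [pairTup]
  have h1 : pairTup e k j (Fin.cast hE.symm 1) = j := by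
    simp [pairTup]
  rw [h0, h1]

lemma pos_of_edge
    (hdec : ∀ i j : Fin N, (⟨e, pairTup e i j⟩ ∈ φ.pos ∨ ⟨e, pairTup e i j⟩ ∈ φ.neg))
    (hexp : IsExpansionOf e hE E0 S) (hsat : satAtomic S φ t)
    {k j : Fin N} (h : E0 (t k) (t j)) :
    (⟨e, pairTup e k j⟩ : (R : σ) × (Fin (ar R) → Fin N)) ∈ φ.pos := by
  rcases hdec k j with hp | hn
  · exact hp
  · have h2 := hsat.2.1 _ hn
    have h3 := (pair_eval hexp t k j).mpr h
    simp only at h2 h3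
    rw [h3] at h2
    cases h2

lemma edge_transfer
    (hdec : ∀ i j : Fin N, (⟨e, pairTup e i j⟩ ∈ φ.pos ∨ ⟨e, pairTup e i j⟩ ∈ φ.neg))
    (hexp : IsExpansionOf e hE E0 S) (hsat : satAtomic S φ t) (hsat' : satAtomic S φ t')
    {k j : Fin N} (h : E0 (t k) (t j)) : E0 (t' k) (t' j) := by
  have hp := pos_of_edge hdec hexp hsat h
  have h2 := hsat'.1 _ hp
  exact (pair_eval hexp t' k j).mp h2

lemma root_transfer (ht : IsTree E0)
    (hdec : ∀ i j : Fin N, (⟨e, pairTup e i j⟩ ∈ φ.pos ∨ ⟨e, pairTup e i j⟩ ∈ φ.neg))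
    (hexp : IsExpansionOf e hE E0 S) (hsat : satAtomic S φ t) (hsat' : satAtomic S φ t')
    (hclosed' : IsClosedSet E0 (Set.range t'))
    {j : Fin N} (h : IsRoot E0 (t j)) : IsRoot E0 (t' j) := by
  intro x hx
  have hxr : x ∈ Set.range t' := by
    have hmem : x ∈ treeCl E0 (Set.range t') :=
      Or.inr (Or.inr ⟨t' j, ⟨j, rfl⟩, Relation.TransGen.single hx⟩)
    rwa [hclosed'] at hmem
  obtain ⟨k, rfl⟩ := hxr
  exact h (t k) (edge_transfer hdec hexp hsat' hsat hx)

lemma npath_transfer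
    (hdec : ∀ i j : Fin N, (⟨e, pairTup e i j⟩ ∈ φ.pos ∨ ⟨e, pairTup e i j⟩ ∈ φ.neg))
    (hexp : IsExpansionOf e hE E0 S) (hsat : satAtomic S φ t) (hsat' : satAtomic S φ t')
    (hclosed : IsClosedSet E0 (Set.range t)) :
    ∀ (l : ℕ) (j k : Fin N), NPath E0 l (t j) (t k) → NPath E0 l (t' j) (t' k) := by
  intro l
  induction l with
  | zero =>
    intro j k h
    simp only [NPath] at h ⊢
    rw [hsat.2.2 h]
  | succ l ih =>
    intro j k h
    simp only [NPath] at h ⊢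
    obtain ⟨c, hc, hck⟩ := h
    have hcr : c ∈ Set.range t := by
      have hmem : c ∈ treeCl E0 (Set.range t) :=
        Or.inr (Or.inr ⟨t k, ⟨k, rfl⟩, Relation.TransGen.single hck⟩)
      rwa [hclosed] at hmem
    obtain ⟨k', rfl⟩ := hcr
    exact ⟨t' k', ih j k' hc, edge_transfer hdec hexp hsat hsat' hck⟩

end Statement8Helpers

/-- Lemma 5.16: if `p(x̄,ȳ,z̄)` is a closure type over σ implying that every entry of `ȳ`
lies in `cl(x̄)`, with `z̄` nonempty, and `A` is a σ-structure expanding a tree (of height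
at most `Δ`) satisfying `p(ā,b̄,c̄)` and `p(ā,b̄',c̄')`, then `b̄ = b̄'`; hence
`|p(ā,A)| = |p(ā,b̄,A)|`. -/
theorem statement_8
    {σ : Type} {ar : σ → ℕ} (e : σ) (hE : ar e = 2) (Δ : ℕ) (hΔ : 0 < Δ)
    (p : PLA σ ar) (xs ys zs : List ℕ)
    (hp : IsClosureType e hE Δ p (xs ++ ys ++ zs))
    (hzs : zs ≠ [])
    (hcl : ∀ (A : Type) (_ : Fintype A) (S : Struc σ ar A) (E0 : A → A → Prop),
      IsTree E0 → HeightLe E0 Δ → IsExpansionOf e hE E0 S →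
      ∀ β : ℕ → A, eval S p β = 1 → ∀ y ∈ ys, β y ∈ treeCl E0 (β '' {v | v ∈ xs}))
    (A : Type) [Fintype A] (S : Struc σ ar A) (hS : ExpandsTreeLe e hE Δ S) :
    (∀ β β' : ℕ → A, (∀ x ∈ xs, β x = β' x) →
        eval S p β = 1 → eval S p β' = 1 → ∀ y ∈ ys, β y = β' y) ∧
    ∀ β : ℕ → A, eval S p β = 1 →
      Set.ncard {t : Fin (ys ++ zs).length → A | eval S p (updMany β (ys ++ zs) t) = 1} =
      Set.ncard {t : Fin zs.length → A | eval S p (updMany β zs t) = 1} := by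
  classical
  obtain ⟨E0, htree, hheight, hexp⟩ := hS
  obtain ⟨hnd, hfv, m, φ, hAT, hWcl, hsem⟩ := hp
  have hdec := hAT.1
  -- disjointness facts from nodup
  have hnd2 : (xs ++ (ys ++ zs)).Nodup := by rwa [← List.append_assoc]
  have hdxyz : List.Disjoint xs (ys ++ zs) := (List.nodup_append'.mp hnd2).2.2
  have hndyz : (ys ++ zs).Nodup := (List.nodup_append'.mp hnd2).2.1
  have hdyz : List.Disjoint ys zs := (List.nodup_append'.mp hndyz).2.2
  -- first conjunct
  have key : ∀ β β' : ℕ → A, (∀ x ∈ xs, β x = β' x) →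
      eval S p β = 1 → eval S p β' = 1 → ∀ y ∈ ys, β y = β' y := by
    intro β β' hagree h1 h1' y hy
    obtain ⟨w, hsatw, hclw⟩ := ((hsem A ‹Fintype A› S E0 htree hheight hexp β).2).mp h1
    obtain ⟨w', hsatw', hclw'⟩ := ((hsem A ‹Fintype A› S E0 htree hheight hexp β').2).mp h1'
    set vars := xs ++ ys ++ zs with hvars
    set t : Fin (vars.length + m) → A := Fin.append (xtuple β vars) w with htdef
    set t' : Fin (vars.length + m) → A := Fin.append (xtuple β' vars) w' with ht'def
    have hyv : y ∈ vars := by simp [hvars, hy]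
    obtain ⟨iy, hiy⟩ := List.mem_iff_get.mp hyv
    have hty : t (Fin.castAdd m iy) = β y := by
      rw [htdef]; rw [Fin.append_left]; rw [xtuple, hiy]
    have ht'y : t' (Fin.castAdd m iy) = β' y := by
      rw [ht'def]; rw [Fin.append_left]; rw [xtuple, hiy]
    have hcly := hcl A ‹Fintype A› S E0 htree hheight hexp β h1 y hy
    simp only [treeCl, Set.mem_setOf_eq, Set.mem_image] at hcly
    rcases hcly with ⟨x, hx, hxy⟩ | hroot | ⟨b, ⟨x, hx, rfl⟩, hanc⟩
    · -- impossible: β x = β y with x ∈ xs, y ∈ ys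
      exfalso
      have hxv : x ∈ vars := by simp [hvars, hx]
      obtain ⟨ix, hix⟩ := List.mem_iff_get.mp hxv
      have htx : t (Fin.castAdd m ix) = β x := by
        rw [htdef]; rw [Fin.append_left]; rw [xtuple, hix]
      have hEq : Fin.castAdd m ix = Fin.castAdd m iy :=
        hsatw.2.2 (by rw [htx, hty, hxy])
      have hixy : ix = iy := by
        apply Fin.ext
        simpa using congrArg Fin.val hEq
      have hxyeq : x = y := by rw [← hix, ← hiy, hixy]
      exact hdxyz hx (by simp [hxyeq, hy])
    · -- root case
      have h2r : IsRoot E0 (t' (Fin.castAdd m iy)) :=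
        root_transfer htree hdec hexp hsatw hsatw' hclw' (by rwa [hty])
      obtain ⟨r, -, hur⟩ := htree.root_unique
      rw [ht'y] at h2r
      rw [hur _ hroot, hur _ h2r]
    · -- ancestor case
      have hxv : x ∈ vars := by simp [hvars, hx]
      obtain ⟨ix, hix⟩ := List.mem_iff_get.mp hxv
      have htx : t (Fin.castAdd m ix) = β x := by
        rw [htdef]; rw [Fin.append_left]; rw [xtuple, hix]
      have ht'x : t' (Fin.castAdd m ix) = β' x := by
        rw [ht'def]; rw [Fin.append_left]; rw [xtuple, hix]
      obtain ⟨l, hpath⟩ := ancestor_npath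
        (show Ancestor E0 (t (Fin.castAdd m iy)) (t (Fin.castAdd m ix)) by
          rw [hty, htx]; exact hanc)
      have hpath' := npath_transfer hdec hexp hsatw hsatw' hclw (l+1) _ _ hpath
      rw [hty, htx] at hpath
      rw [ht'y, ht'x, ← hagree x hx] at hpath'
      exact npath_unique htree (l+1) _ _ _ hpath hpath'
  refine ⟨key, ?_⟩
  intro β hβ
  set L := ys ++ zs with hL
  have hlen : L.length = ys.length + zs.length := List.length_append
  set f : (Fin L.length → A) → (Fin zs.length → A) :=
    fun u i => u ⟨ys.length + (i : ℕ), by have := i.isLt; omega⟩ with hf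
  -- the assignments agree on xs
  have hagree_x : ∀ u : Fin L.length → A, ∀ x ∈ xs, updMany β L u x = β x := by
    intro u x hx
    simp only [updMany]
    rw [dif_neg (fun h => hdxyz hx h)]
  have hys_val : ∀ u : Fin L.length → A, eval S p (updMany β L u) = 1 →
      ∀ v ∈ ys, updMany β L u v = β v := by
    intro u hu v hv
    exact key (updMany β L u) β (fun x hx => hagree_x u x hx) hu hβ v hv
  have hassign : ∀ u : Fin L.length → A, eval S p (updMany β L u) = 1 →
      updMany β L u = updMany β zs (f u) := by
    intro u hu
    funext v
    by_cases hvz : v ∈ zs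
    · have hvy : v ∉ ys := fun h => hdyz h hvz
      have hvL : v ∈ L := by simp [hL, hvz]
      have hidx : L.idxOf v = ys.length + zs.idxOf v :=
        List.idxOf_append_of_notMem hvy
      simp only [updMany, hf]
      rw [dif_pos hvL, dif_pos hvz]
      congr 1
      apply Fin.ext
      simp [hidx]
    · by_cases hvy : v ∈ ys
      · have hvL : v ∈ L := by simp [hL, hvy]
        have hval := hys_val u hu v hvy
        simp only [updMany] at hval ⊢
        rw [dif_pos hvL] at hval
        rw [dif_pos hvL, dif_neg hvz]
        exact hval
      · have hvL : v ∉ L := by simp [hL, hvz, hvy]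
        simp only [updMany]
        rw [dif_neg hvL, dif_neg hvz]
  have himage : {s : Fin zs.length → A | eval S p (updMany β zs s) = 1} =
      f '' {u : Fin L.length → A | eval S p (updMany β L u) = 1} := by
    ext s
    simp only [Set.mem_setOf_eq, Set.mem_image]
    constructor
    · intro hs
      refine ⟨fun i => if h : (i : ℕ) < ys.length then β (ys.get ⟨(i : ℕ), h⟩)
        else s ⟨(i : ℕ) - ys.length, by have := i.isLt; omega⟩, ?_, ?_⟩
      · have hux : updMany β L (fun i => if h : (i : ℕ) < ys.length then β (ys.get ⟨(i : ℕ), h⟩)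
            else s ⟨(i : ℕ) - ys.length, by have := i.isLt; omega⟩) = updMany β zs s := by
          funext v
          by_cases hvy : v ∈ ys
          · have hvz : v ∉ zs := fun h => hdyz hvy h
            have hvL : v ∈ L := by simp [hL, hvy]
            have hidx : L.idxOf v = ys.idxOf v := List.idxOf_append_of_mem hvy
            have hlt : L.idxOf v < ys.length := by
              rw [hidx]; exact List.idxOf_lt_length_iff.mpr hvy
            simp only [updMany]
            rw [dif_pos hvL, dif_neg hvz]
            simp only [dif_pos hlt]
            have hlt' : ys.idxOf v < ys.length := List.idxOf_lt_length_iff.mpr hvy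
            have hfin : (⟨(L.idxOf v : ℕ), hlt⟩ : Fin ys.length) = ⟨ys.idxOf v, hlt'⟩ :=
              Fin.ext hidx
            rw [hfin, List.idxOf_get hlt']
          · by_cases hvz : v ∈ zs
            · have hvL : v ∈ L := by simp [hL, hvz]
              have hidx : L.idxOf v = ys.length + zs.idxOf v :=
                List.idxOf_append_of_notMem hvy
              simp only [updMany]
              rw [dif_pos hvL, dif_pos hvz]
              have hnlt : ¬ (L.idxOf v : ℕ) < ys.length := by omega
              simp only [dif_neg hnlt]
              congr 1
              apply Fin.ext
              simp [hidx]
            · have hvL : v ∉ L := by simp [hL, hvz, hvy]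
              simp only [updMany]
              rw [dif_neg hvL, dif_neg hvz]
        rw [hux]; exact hs
      · funext i
        simp only [hf]
        have hnlt : ¬ ys.length + (i : ℕ) < ys.length := by omega
        simp only [dif_neg hnlt]
        congr 1
        apply Fin.ext
        simp
    · rintro ⟨u, hu, rfl⟩
      rw [← hassign u hu]
      exact hu
  have hinj : Set.InjOn f {u : Fin L.length → A | eval S p (updMany β L u) = 1} := by
    intro u hu u2 hu2 hff
    simp only [Set.mem_setOf_eq] at hu hu2
    funext i
    by_cases hi : (i : ℕ) < ys.length
    · have hvget : L[(i : ℕ)]'(i.isLt) = ys.get ⟨(i : ℕ), hi⟩ := by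
        have h2 : (ys ++ zs)[(i : ℕ)]'(by simp [List.length_append]; omega) = ys[(i : ℕ)]'hi :=
          List.getElem_append_left hi
        simpa using h2
      set v := ys.get ⟨(i : ℕ), hi⟩ with hv
      have hvy : v ∈ ys := List.get_mem ys _
      have hvL : v ∈ L := by simp [hL, hvy]
      have hidx : L.idxOf v = (i : ℕ) := by
        rw [← hvget]
        exact List.Nodup.idxOf_getElem hndyz _ i.isLt
      have huval : ∀ u' : Fin L.length → A, eval S p (updMany β L u') = 1 → u' i = β v := by
        intro u' hu'
        have h1 := hys_val u' hu' v hvy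
        simp only [updMany] at h1
        rw [dif_pos hvL] at h1
        rw [← h1]
        congr 1
        exact Fin.ext hidx.symm
      rw [huval u hu, huval u2 hu2]
    · have hieq : u i = f u ⟨(i : ℕ) - ys.length, by have := i.isLt; omega⟩ := by
        simp only [hf]
        congr 1
        apply Fin.ext
        simp; omega
      have hieq2 : u2 i = f u2 ⟨(i : ℕ) - ys.length, by have := i.isLt; omega⟩ := by
        simp only [hf]
        congr 1
        apply Fin.ext
        simp; omega
      rw [hieq, hieq2, hff]
  rw [himage, Set.ncard_image_of_injOn hinj]

end PaperTrees
end
end
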